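/- arXiv:1310.6920 — 9 statements merged into one kernel-verified Lean document; each statement's English description precedes it below -/
import Mathlib

section
/- Let H be a real Hilbert space, G a group acting on H by linear isometries, and Σ = H^G the closed subspace of G-fixed points. If f : H → ℝ is a C¹ function invariant under the G-action (f(g x) = f(x) for all g ∈ G, x ∈ H), and x ∈ Σ is a critical point of the restriction of f to Σ, then x is a critical point of f on all of H. -/
/-- **Principle of symmetric criticality** (linear isometric Hilbert space setting):
if `f : H → ℝ` is a `C¹` function invariant under a group `G` acting on the real
Hilbert space `H` by linear isometries, and `x` is a `G`-fixed point which is a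
critical point of the restriction of `f` to the fixed subspace
`Σ = {y : ∀ g, ρ g y = y}`, then `x` is a critical point of `f` on all of `H`. -/
theorem symmetric_criticality
    {H : Type*} [NormedAddCommGroup H] [InnerProductSpace ℝ H] [CompleteSpace H]
    {G : Type*} [Group G] (ρ : G →* (H ≃ₗᵢ[ℝ] H))
    (f : H → ℝ) (hf : ContDiff ℝ 1 f)
    (hinv : ∀ (g : G) (y : H), f (ρ g y) = f y)
    (x : H) (hx : ∀ g : G, ρ g x = x)
    (hcrit : ∀ h : H, (∀ g : G, ρ g h = h) → fderiv ℝ f x h = 0) :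
    fderiv ℝ f x = 0 := by
  set D : H →L[ℝ] ℝ := fderiv ℝ f x with hD
  have hdiff : DifferentiableAt ℝ f x := (hf.differentiable one_ne_zero).differentiableAt
  -- invariance of the derivative: D (ρ g h) = D h
  have hDinv : ∀ (g : G) (h : H), D ((ρ g) h) = D h := by
    intro g h
    have hA : HasFDerivAt (fun y => (ρ g) y)
        ((ρ g).toContinuousLinearEquiv : H →L[ℝ] H) x :=
      (ρ g).toContinuousLinearEquiv.hasFDerivAt
    have hfx : HasFDerivAt f D ((ρ g) x) := by
      rw [hx g]; exact hdiff.hasFDerivAt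
    have hcomp : HasFDerivAt (f ∘ fun y => (ρ g) y)
        (D.comp ((ρ g).toContinuousLinearEquiv : H →L[ℝ] H)) x := hfx.comp x hA
    have heq : (f ∘ fun y => (ρ g) y) = f := funext fun y => hinv g y
    rw [heq] at hcomp
    have := hcomp.fderiv
    calc D ((ρ g) h) = (D.comp ((ρ g).toContinuousLinearEquiv : H →L[ℝ] H)) h := rfl
      _ = D h := by rw [← this, ← hD]
  -- Riesz representative
  set v : H := (InnerProductSpace.toDual ℝ H).symm D with hv
  have hvd : ∀ h : H, D h = inner ℝ v h := by
    intro h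
    have := (InnerProductSpace.toDual ℝ H).apply_symm_apply D
    rw [← this]; rfl
  -- v is G-fixed
  have hvfix : ∀ g : G, (ρ g) v = v := by
    intro g
    apply ext_inner_right ℝ
    intro h
    have h1 : (inner ℝ ((ρ g) v) h : ℝ) = inner ℝ v ((ρ g).symm h) := by
      conv_lhs => rw [← (ρ g).apply_symm_apply h]
      exact (ρ g).inner_map_map v ((ρ g).symm h)
    rw [h1, ← hvd, ← hvd]
    have := hDinv g ((ρ g).symm h)
    rw [(ρ g).apply_symm_apply] at this
    exact this.symm
  have hDv : D v = 0 := hcrit v hvfix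
  have hv0 : v = 0 := by
    have : (inner ℝ v v : ℝ) = 0 := by rw [← hvd]; exact hDv
    exact inner_self_eq_zero.mp this
  ext h
  rw [hvd h, hv0, inner_zero_left]
  rfl
end

section
/- Let H be a real Hilbert space, G a group acting on H by linear isometries with fixed subspace Σ, and f : H → ℝ a G-invariant C² function. If x ∈ Σ is a critical point of f restricted to Σ, then the second derivative bilinear form D²f(x) satisfies D²f(x)(h, k) = 0 for all h ∈ Σ and k ∈ Σ^⊥; i.e. the orthogonal decomposition H = Σ ⊕ Σ^⊥ is also orthogonal for D²f(x). -/
/-- **Second-order symmetric criticality**: let `G` act on a real Hilbert space `H`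
by linear isometries, with fixed-point subspace `Σ`, and let `f : H → ℝ` be a
`G`-invariant `C²` function. If `x ∈ Σ` is a critical point of the restriction of
`f` to `Σ`, then `D²f(x)(h, k) = 0` for all `h ∈ Σ` and `k ∈ Σᗮ`; i.e. the
orthogonal decomposition `H = Σ ⊕ Σᗮ` is orthogonal for the bilinear form `D²f(x)`. -/
theorem symmetric_criticality_second_variation
    {H : Type*} [NormedAddCommGroup H] [InnerProductSpace ℝ H] [CompleteSpace H]
    {G : Type*} [Group G] (ρ : G →* (H ≃ₗᵢ[ℝ] H))
    (Sig : Submodule ℝ H) (hSig : ∀ y : H, y ∈ Sig ↔ ∀ g : G, ρ g y = y)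
    (f : H → ℝ) (hf : ContDiff ℝ 2 f)
    (hinv : ∀ (g : G) (y : H), f (ρ g y) = f y)
    (x : H) (hx : x ∈ Sig)
    (hcrit : ∀ h ∈ Sig, fderiv ℝ f x h = 0) :
    ∀ h ∈ Sig, ∀ k ∈ Sigᗮ, fderiv ℝ (fderiv ℝ f) x h k = 0 := by
  intro h hh k hk
  have hfd : Differentiable ℝ f := hf.differentiable (by norm_num)
  have hfd1 : ContDiff ℝ 1 (fderiv ℝ f) := hf.fderiv_right (by norm_num)
  have hF1d : Differentiable ℝ (fderiv ℝ f) := hfd1.differentiable (by norm_num)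
  -- Step 1: first derivative invariance: fderiv f y = (fderiv f (ρ g y)).comp (ρ g)
  have step1 : ∀ (g : G) (y : H),
      fderiv ℝ f y =
        (fderiv ℝ f ((ρ g).toContinuousLinearEquiv y)).comp
          ((ρ g).toContinuousLinearEquiv : H →L[ℝ] H) := by
    intro g y
    set e := (ρ g).toContinuousLinearEquiv
    have hfe : f ∘ e = f := by
      funext z; simp [e, hinv g z, LinearIsometryEquiv.coe_toContinuousLinearEquiv]
    have := (ContinuousLinearEquiv.comp_right_hasFDerivAt_iff e
        (f' := fderiv ℝ f (e y))).mpr (hfd (e y)).hasFDerivAt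
    rw [hfe] at this
    exact this.fderiv
  -- Step 2: second derivative invariance at the fixed point x
  have step2 : ∀ (g : G) (u v : H),
      fderiv ℝ (fderiv ℝ f) x u v = fderiv ℝ (fderiv ℝ f) x (ρ g u) (ρ g v) := by
    intro g u v
    set e := (ρ g).toContinuousLinearEquiv with he
    set T : H →L[ℝ] H := (e : H →L[ℝ] H) with hT
    set Φ : (H →L[ℝ] ℝ) →L[ℝ] (H →L[ℝ] ℝ) := (ContinuousLinearMap.compL ℝ H H ℝ).flip T
      with hΦ
    have hΦapp : ∀ A : H →L[ℝ] ℝ, Φ A = A.comp T := fun A => rfl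
    have hfun : (fderiv ℝ f) = fun y => Φ (fderiv ℝ f (T y)) := by
      funext y
      rw [hΦapp]
      exact step1 g y
    have hex : e x = x := (hSig x).mp hx g
    have hder : HasFDerivAt (fun y => Φ (fderiv ℝ f (T y)))
        (Φ.comp ((fderiv ℝ (fderiv ℝ f) (T x)).comp T)) x := by
      exact Φ.hasFDerivAt.comp x (((hF1d (T x)).hasFDerivAt).comp x (T.hasFDerivAt))
    have hTx : T x = x := hex
    rw [hTx] at hder
    have key : fderiv ℝ (fderiv ℝ f) x
        = Φ.comp ((fderiv ℝ (fderiv ℝ f) x).comp T) := by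
      conv_lhs => rw [hfun]
      exact hder.fderiv
    have : fderiv ℝ (fderiv ℝ f) x u v
        = (Φ.comp ((fderiv ℝ (fderiv ℝ f) x).comp T)) u v := by rw [← key]
    rw [this]
    simp only [ContinuousLinearMap.comp_apply, hΦapp]
    rfl
  -- The functional L(v) = D²f(x)(h, v) is G-invariant
  set L : H →L[ℝ] ℝ := fderiv ℝ (fderiv ℝ f) x h with hL
  have hLinv : ∀ (g : G) (v : H), L (ρ g v) = L v := by
    intro g v
    have hgh : ρ g h = h := (hSig h).mp hh g
    have := step2 g h v
    rw [hgh] at this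
    exact this.symm
  -- Riesz representative of L lies in Sig
  set w : H := (InnerProductSpace.toDual ℝ H).symm L with hw
  have hwL' : ∀ v : H, (inner ℝ w v : ℝ) = L v := by
    intro v
    exact InnerProductSpace.toDual_symm_apply
  have hwfix : ∀ g : G, ρ g w = w := by
    intro g
    have : ∀ v : H, (inner ℝ (ρ g w) v : ℝ) = inner ℝ w v := by
      intro v
      have h1 : (inner ℝ (ρ g w) v : ℝ) = inner ℝ w ((ρ g).symm v) := by
        have := (ρ g).inner_map_map w ((ρ g).symm v)
        simpa using this
      rw [h1, hwL', hwL']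
      have h2 : (ρ g).symm v = ρ g⁻¹ v := by
        apply (ρ g).injective
        have hmul : (ρ g) ((ρ g⁻¹) v) = (ρ (g * g⁻¹)) v := by rw [map_mul]; rfl
        rw [LinearIsometryEquiv.apply_symm_apply, hmul]
        simp
      rw [h2, hLinv g⁻¹]
    exact ext_inner_right ℝ this
  have hwSig : w ∈ Sig := (hSig w).mpr hwfix
  have : L k = inner ℝ w k := (hwL' k).symm
  rw [hL] at this
  rw [this]
  exact (Submodule.mem_orthogonal Sig k).mp hk w hwSig
end

section
/- For λ > 0, every C² solution q of (1/λ²) q'' = (q² − 4) q on [−1,1] with q(−1) = 2, q(1) = −2, satisfies the first integral identity (1/(2λ²)) q'(x)² = (1/4)(q(x)² − 4)² + q'(−1)² for all x ∈ [−1,1], and consequently q'(x) < 0 for all x ∈ [−1,1]; i.e., q is strictly decreasing. -/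
open Set

set_option maxHeartbeats 1000000 in
/-- Every `C²` solution of `(1/λ²) q'' = (q² − 4) q` on `[−1,1]` with `q(−1) = 2`,
`q(1) = −2` satisfies the first integral identity
`(1/(2λ²)) q'(x)² = (1/4)(q(x)² − 4)² + (1/(2λ²)) q'(−1)²` (the constant of
integration being the value of the left-hand side at `x = −1`, where `q² − 4 = 0`),
and consequently `q' < 0` on `[−1,1]`: `q` is strictly decreasing. -/
theorem bvp_first_integral_and_decreasing (lam : ℝ) (hlam : 0 < lam)
    (q : ℝ → ℝ) (hq : ContDiff ℝ 2 q)
    (hode : ∀ x ∈ Set.Icc (-1 : ℝ) 1,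
      (1 / lam ^ 2) * deriv (deriv q) x = ((q x) ^ 2 - 4) * q x)
    (hbc1 : q (-1) = 2) (hbc2 : q 1 = -2) :
    (∀ x ∈ Set.Icc (-1 : ℝ) 1,
      (1 / (2 * lam ^ 2)) * (deriv q x) ^ 2 =
        (1 / 4) * ((q x) ^ 2 - 4) ^ 2 + (1 / (2 * lam ^ 2)) * (deriv q (-1)) ^ 2) ∧
    (∀ x ∈ Set.Icc (-1 : ℝ) 1, deriv q x < 0) := by
  have hlam2 : (0:ℝ) < lam ^ 2 := by positivity
  have hq2 : ContDiff ℝ (1 + 1) q := by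
    rw [show ((1:WithTop ℕ∞) + 1) = 2 from by norm_num]; exact hq
  have hqd : Differentiable ℝ q := hq.differentiable (by norm_num)
  have hq'cd : ContDiff ℝ 1 (deriv q) := (contDiff_succ_iff_deriv.mp hq2).2.2
  have hq'd : Differentiable ℝ (deriv q) := hq'cd.differentiable (by norm_num)
  have hq'cont : Continuous (deriv q) := hq'd.continuous
  have hqderiv : ∀ x, HasDerivAt q (deriv q x) x := fun x => (hqd x).hasDerivAt
  have hq'deriv : ∀ x, HasDerivAt (deriv q) (deriv (deriv q) x) x :=
    fun x => (hq'd x).hasDerivAt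
  -- the energy function
  set E : ℝ → ℝ := fun x =>
    (1 / (2 * lam ^ 2)) * (deriv q x) ^ 2 - (1 / 4) * ((q x) ^ 2 - 4) ^ 2 with hEdef
  have hEhas : ∀ x, HasDerivAt E
      ((1 / lam ^ 2) * deriv q x * deriv (deriv q) x
        - ((q x) ^ 2 - 4) * q x * deriv q x) x := by
    intro x
    have h1 : HasDerivAt (fun x => (deriv q x) ^ 2)
        (2 * deriv q x * deriv (deriv q) x) x := by
      simpa [mul_comm, mul_assoc] using ((hq'deriv x).fun_pow 2)
    have h2 : HasDerivAt (fun x => ((q x) ^ 2 - 4) ^ 2)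
        (2 * ((q x) ^ 2 - 4) * (2 * q x * deriv q x)) x := by
      have hb : HasDerivAt (fun x => (q x) ^ 2 - 4) (2 * q x * deriv q x) x := by
        simpa [mul_comm, mul_assoc] using (((hqderiv x).pow 2).sub_const 4)
      simpa [mul_comm, mul_assoc] using (hb.fun_pow 2)
    have := ((h1.const_mul (1 / (2 * lam ^ 2))).fun_sub (h2.const_mul (1 / 4)))
    refine this.congr_deriv ?_
    field_simp
    ring
  have hEderiv0 : ∀ x ∈ Icc (-1:ℝ) 1, deriv E x = 0 := by
    intro x hx
    rw [(hEhas x).deriv]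
    linear_combination (deriv q x) * (hode x hx)
  have hEconst : ∀ x ∈ Icc (-1:ℝ) 1, E x = E (-1) := by
    have hdiff : DifferentiableOn ℝ E (Icc (-1:ℝ) 1) :=
      fun x _ => ((hEhas x).differentiableAt).differentiableWithinAt
    refine constant_of_derivWithin_zero hdiff ?_
    intro x hx
    have hxI : x ∈ Icc (-1:ℝ) 1 := ⟨hx.1, le_of_lt hx.2⟩
    rw [((hEhas x).differentiableAt).derivWithin
      (uniqueDiffOn_Icc (by norm_num : (-1:ℝ) < 1) x hxI)]
    exact hEderiv0 x hxI
  have hfirst : ∀ x ∈ Icc (-1:ℝ) 1,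
      (1 / (2 * lam ^ 2)) * (deriv q x) ^ 2 =
        (1 / 4) * ((q x) ^ 2 - 4) ^ 2 + (1 / (2 * lam ^ 2)) * (deriv q (-1)) ^ 2 := by
    intro x hx
    have h := hEconst x hx
    simp only [hEdef] at h
    rw [hbc1] at h
    norm_num at h
    linear_combination h
  refine ⟨hfirst, ?_⟩
  -- bound on q on the interval
  obtain ⟨M0, hM0⟩ := (isCompact_Icc (a := (-1:ℝ)) (b := 1)).exists_bound_of_continuousOn
    hqd.continuous.continuousOn
  set M : ℝ := max M0 0 with hMdef
  have hM : ∀ x ∈ Icc (-1:ℝ) 1, |q x| ≤ M := fun x hx =>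
    le_trans (by simpa using hM0 x hx) (le_max_left _ _)
  have hMnn : (0:ℝ) ≤ M := le_max_right _ _
  have hM2 : (2:ℝ) ≤ M := by
    have := hM (-1) (by norm_num)
    rw [hbc1] at this
    calc (2:ℝ) = |2| := by norm_num
    _ ≤ M := this
  set C : ℝ := 1 + lam ^ 2 * (M + 2) * M with hCdef
  have hCpos : (0:ℝ) < C := by positivity
  -- the derivative of q never vanishes on [-1,1]
  have hne : ∀ x ∈ Icc (-1:ℝ) 1, deriv q x ≠ 0 := by
    intro x0 hx0 h0
    have hid := hfirst x0 hx0
    rw [h0] at hid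
    have hc : (0:ℝ) < 1 / (2 * lam ^ 2) := by positivity
    have ht : (1 / (2 * lam ^ 2)) * (deriv q (-1)) ^ 2 ≤ 0 := by
      nlinarith [sq_nonneg ((q x0) ^ 2 - 4)]
    have ht0 : (1 / (2 * lam ^ 2)) * (deriv q (-1)) ^ 2 = 0 :=
      le_antisymm ht (by positivity)
    have hd0 : deriv q (-1) = 0 := by
      rcases mul_eq_zero.mp ht0 with h | h
      · exact absurd h (ne_of_gt hc)
      · exact pow_eq_zero_iff (by norm_num) |>.mp h
    -- Gronwall argument: q ≡ 2, contradiction with q 1 = -2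
    set g : ℝ → ℝ := fun x => (q x - 2) ^ 2 + (deriv q x) ^ 2 with hgdef
    have hghas : ∀ x, HasDerivAt g
        (2 * (q x - 2) * deriv q x + 2 * deriv q x * deriv (deriv q) x) x := by
      intro x
      have h1 : HasDerivAt (fun x => (q x - 2) ^ 2) (2 * (q x - 2) * deriv q x) x := by
        simpa [mul_comm, mul_assoc] using (((hqderiv x).sub_const 2).fun_pow 2)
      have h2 : HasDerivAt (fun x => (deriv q x) ^ 2)
          (2 * deriv q x * deriv (deriv q) x) x := by
        simpa [mul_comm, mul_assoc] using ((hq'deriv x).fun_pow 2)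
      exact h1.add h2
    set h : ℝ → ℝ := fun x => g x * Real.exp (-C * x) with hhdef
    have hhhas : ∀ x, HasDerivAt h
        ((2 * (q x - 2) * deriv q x + 2 * deriv q x * deriv (deriv q) x
          - C * g x) * Real.exp (-C * x)) x := by
      intro x
      have he : HasDerivAt (fun x => Real.exp (-C * x)) (Real.exp (-C * x) * (-C)) x := by
        simpa using ((hasDerivAt_id x).const_mul (-C)).exp
      have := (hghas x).fun_mul he
      refine this.congr_deriv ?_
      ring
    have hanti : AntitoneOn h (Icc (-1:ℝ) 1) := by
      apply antitoneOn_of_deriv_nonpos (convex_Icc _ _)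
      · exact fun x _ => ((hhhas x).differentiableAt).continuousAt.continuousWithinAt
      · exact fun x _ => ((hhhas x).differentiableAt).differentiableWithinAt
      · intro x hx
        rw [interior_Icc] at hx
        have hxI : x ∈ Icc (-1:ℝ) 1 := ⟨le_of_lt hx.1, le_of_lt hx.2⟩
        rw [(hhhas x).deriv]
        have hqbd := hM x hxI
        have hqle : q x ≤ M := (abs_le.mp hqbd).2
        have hqge : -M ≤ q x := (abs_le.mp hqbd).1
        have hq2M : (q x) ^ 2 ≤ M ^ 2 := sq_le_sq' (by linarith) hqle
        have hq'' : deriv (deriv q) x = lam ^ 2 * (((q x) ^ 2 - 4) * q x) := by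
          have h := hode x hxI
          field_simp at h
          linear_combination h
        rw [hq'']
        apply mul_nonpos_of_nonpos_of_nonneg _ (Real.exp_nonneg _)
        set A : ℝ := 1 + lam ^ 2 * (q x + 2) * q x with hAdef
        have hsum : q x ^ 2 + 2 * q x ≤ M ^ 2 + 2 * M := by linarith
        have h2 : lam ^ 2 * (q x ^ 2 + 2 * q x) ≤ lam ^ 2 * (M ^ 2 + 2 * M) :=
          mul_le_mul_of_nonneg_left hsum hlam2.le
        have hAle : A ≤ C := by simp only [hAdef, hCdef]; nlinarith [h2]
        have h3 : (-1:ℝ) ≤ q x ^ 2 + 2 * q x := by nlinarith [sq_nonneg (q x + 1)]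
        have h4 : -(lam ^ 2) ≤ lam ^ 2 * (q x ^ 2 + 2 * q x) := by
          nlinarith [mul_le_mul_of_nonneg_left h3 hlam2.le]
        have h5 : lam ^ 2 ≤ lam ^ 2 * (M ^ 2 + 2 * M) := by
          nlinarith [mul_le_mul_of_nonneg_left (show (1:ℝ) ≤ M ^ 2 + 2 * M by nlinarith) hlam2.le]
        have hAge : -C ≤ A := by simp only [hAdef, hCdef]; nlinarith
        have key : 2 * deriv q x * (q x - 2) * A
            ≤ C * ((q x - 2) ^ 2 + (deriv q x) ^ 2) := by
          nlinarith [mul_nonneg (sub_nonneg.mpr hAle) (sq_nonneg (deriv q x + (q x - 2))),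
            mul_nonneg (sub_nonneg.mpr (by linarith : A - (-C) ≥ 0).le)
              (sq_nonneg (deriv q x - (q x - 2)))]
        simp only [hgdef, hAdef] at key ⊢
        nlinarith [key]
    have hgm1 : g (-1) = 0 := by simp [hgdef, hbc1, hd0]
    have h1le : h 1 ≤ h (-1) :=
      hanti (by norm_num : (-1:ℝ) ∈ Icc (-1:ℝ) 1) (by norm_num : (1:ℝ) ∈ Icc (-1:ℝ) 1)
        (by norm_num)
    have hhm1 : h (-1) = 0 := by simp [hhdef, hgm1]
    have hg1 : (0:ℝ) ≤ g 1 := by simp only [hgdef]; positivity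
    have hexp : (0:ℝ) < Real.exp (-C * 1) := Real.exp_pos _
    have hgle : g 1 ≤ 0 := by
      by_contra hlt
      push_neg at hlt
      have hp : 0 < h 1 := by simp only [hhdef]; exact mul_pos hlt hexp
      linarith [hhm1 ▸ h1le]
    have hg1' : g 1 = 0 := le_antisymm hgle hg1
    simp only [hgdef, hbc2] at hg1'
    nlinarith [sq_nonneg (deriv q 1), hg1']
  -- MVT: there is a point where the derivative is negative
  obtain ⟨c, hc, hc'⟩ := exists_deriv_eq_slope q (by norm_num : (-1:ℝ) < 1)
    hqd.continuous.continuousOn (hqd.differentiableOn)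
  have hcI : c ∈ Icc (-1:ℝ) 1 := ⟨le_of_lt hc.1, le_of_lt hc.2⟩
  have hcneg : deriv q c < 0 := by
    rw [hc', hbc1, hbc2]; norm_num
  -- conclude by IVT
  intro x hx
  by_contra hge
  push_neg at hge
  have hxpos : 0 < deriv q x := lt_of_le_of_ne hge (Ne.symm (hne x hx))
  have hsub : uIcc c x ⊆ Icc (-1:ℝ) 1 := uIcc_subset_Icc hcI hx
  have hmem : (0:ℝ) ∈ uIcc (deriv q c) (deriv q x) := by
    rw [mem_uIcc]; left; exact ⟨le_of_lt hcneg, le_of_lt hxpos⟩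
  obtain ⟨y, hy, hy0⟩ := intermediate_value_uIcc (hq'cont.continuousOn) hmem
  exact hne y (hsub hy) hy0
end

section
/- For each λ > 0, the boundary value problem (1/λ²) q'' = (q² − 4) q on (−1, 1), q(−1) = 2, q(1) = −2, has at most one C² solution. -/
open Set Filter Topology

lemma sysUnique (lam : ℝ) (q r : ℝ → ℝ) (hq : ContDiff ℝ 2 q) (hr : ContDiff ℝ 2 r)
    (hqode : ∀ x ∈ Set.Icc (-1 : ℝ) 1,
      deriv (deriv q) x = lam ^ 2 * (((q x) ^ 2 - 4) * q x))
    (hrode : ∀ x ∈ Set.Icc (-1 : ℝ) 1,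
      deriv (deriv r) x = lam ^ 2 * (((r x) ^ 2 - 4) * r x))
    (h0 : q (-1) = r (-1)) (h1 : deriv q (-1) = deriv r (-1)) :
    Set.EqOn q r (Set.Icc (-1 : ℝ) 1) := by
  have hq1 : ContDiff ℝ 1 (deriv q) := by
    have := (contDiff_succ_iff_deriv.mp (show ContDiff ℝ (1 + 1) q by norm_num [hq])).2.2
    exact this
  have hr1 : ContDiff ℝ 1 (deriv r) := by
    have := (contDiff_succ_iff_deriv.mp (show ContDiff ℝ (1 + 1) r by norm_num [hr])).2.2
    exact this
  set v : ℝ × ℝ → ℝ × ℝ := fun p => (p.2, lam ^ 2 * ((p.1 ^ 2 - 4) * p.1)) with hv_def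
  have hv_cd : ContDiff ℝ 1 v := by
    apply ContDiff.prodMk contDiff_snd
    exact (contDiff_const.mul (((contDiff_fst.pow 2).sub contDiff_const).mul contDiff_fst))
  set f : ℝ → ℝ × ℝ := fun t => (q t, deriv q t) with hf_def
  set g : ℝ → ℝ × ℝ := fun t => (r t, deriv r t) with hg_def
  have hfc : ContinuousOn f (Set.Icc (-1 : ℝ) 1) :=
    ((hq.continuous.prodMk (hq1.continuous))).continuousOn
  have hgc : ContinuousOn g (Set.Icc (-1 : ℝ) 1) :=
    ((hr.continuous.prodMk (hr1.continuous))).continuousOn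
  obtain ⟨Rf, hRf⟩ := (isCompact_Icc : IsCompact (Set.Icc (-1:ℝ) 1)).exists_bound_of_continuousOn hfc
  obtain ⟨Rg, hRg⟩ := (isCompact_Icc : IsCompact (Set.Icc (-1:ℝ) 1)).exists_bound_of_continuousOn hgc
  set R := max Rf Rg with hR_def
  set s : Set (ℝ × ℝ) := Metric.closedBall 0 R with hs_def
  -- Lipschitz constant for v on s
  obtain ⟨M, hM⟩ := (isCompact_closedBall (0 : ℝ × ℝ) R).exists_bound_of_continuousOn
    ((hv_cd.continuous_fderiv (by norm_num)).continuousOn)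
  set C : NNReal := ⟨max M 0, le_max_right _ _⟩ with hC_def
  have hlip : LipschitzOnWith C v s := by
    exact (convex_closedBall _ _).lipschitzOnWith_of_nnnorm_fderiv_le
      (fun x _ => (hv_cd.differentiable (by norm_num)).differentiableAt)
      (fun x hx => by
        have h : ‖fderiv ℝ v x‖ ≤ max M 0 := le_trans (hM x hx) (le_max_left _ _)
        exact h)
  have key : Set.EqOn f g (Set.Icc (-1 : ℝ) 1) := by
    apply ODE_solution_unique_of_mem_Icc_right (v := fun _ => v) (s := fun _ => s)
      (fun _ _ => hlip) hfc ?_ ?_ hgc ?_ ?_ ?_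
    · intro t ht
      have ht' : t ∈ Set.Icc (-1:ℝ) 1 := Set.Ico_subset_Icc_self ht
      have h1 : HasDerivAt f (deriv q t, deriv (deriv q) t) t :=
        ((hq.differentiable (by norm_num) t).hasDerivAt).prodMk
          ((hq1.differentiable (by norm_num) t).hasDerivAt)
      have : v (f t) = (deriv q t, deriv (deriv q) t) := by
        simp only [hv_def, hf_def, hqode t ht']
      show HasDerivWithinAt _ (v _) _ _
      exact this ▸ h1.hasDerivWithinAt
    · intro t ht
      have := hRf t (Set.Ico_subset_Icc_self ht)
      simp only [hs_def, Metric.mem_closedBall, dist_zero_right]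
      exact le_trans this (le_max_left _ _)
    · intro t ht
      have ht' : t ∈ Set.Icc (-1:ℝ) 1 := Set.Ico_subset_Icc_self ht
      have h1 : HasDerivAt g (deriv r t, deriv (deriv r) t) t :=
        ((hr.differentiable (by norm_num) t).hasDerivAt).prodMk
          ((hr1.differentiable (by norm_num) t).hasDerivAt)
      have : v (g t) = (deriv r t, deriv (deriv r) t) := by
        simp only [hv_def, hg_def, hrode t ht']
      show HasDerivWithinAt _ (v _) _ _
      exact this ▸ h1.hasDerivWithinAt
    · intro t ht
      have := hRg t (Set.Ico_subset_Icc_self ht)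
      simp only [hs_def, Metric.mem_closedBall, dist_zero_right]
      exact le_trans this (le_max_right _ _)
    · simp only [hf_def, hg_def, h0, h1]
  intro x hx
  have := key hx
  exact congrArg Prod.fst this

lemma energy (lam : ℝ) (q : ℝ → ℝ) (hq : ContDiff ℝ 2 q)
    (hqode : ∀ x ∈ Set.Icc (-1 : ℝ) 1,
      deriv (deriv q) x = lam ^ 2 * (((q x) ^ 2 - 4) * q x))
    (hqbc1 : q (-1) = 2) :
    ∀ x ∈ Set.Icc (-1 : ℝ) 1,
      (deriv q x) ^ 2 = lam ^ 2 / 2 * ((q x) ^ 2 - 4) ^ 2 + (deriv q (-1)) ^ 2 := by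
  have hq1 : ContDiff ℝ 1 (deriv q) := by
    have := (contDiff_succ_iff_deriv.mp (show ContDiff ℝ (1 + 1) q by norm_num [hq])).2.2
    exact this
  set E : ℝ → ℝ := fun x => (deriv q x) ^ 2 - lam ^ 2 / 2 * ((q x) ^ 2 - 4) ^ 2 with hE_def
  have hEcont : ContinuousOn E (Set.Icc (-1 : ℝ) 1) := by
    apply Continuous.continuousOn
    exact (hq1.continuous.pow 2).sub
      (continuous_const.mul ((hq.continuous.pow 2 |>.sub continuous_const).pow 2))
  have hEderiv : ∀ x ∈ Set.Icc (-1 : ℝ) 1, HasDerivAt E 0 x := by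
    intro x hx
    have hdq : HasDerivAt q (deriv q x) x := (hq.differentiable (by norm_num) x).hasDerivAt
    have hdq' : HasDerivAt (deriv q) (deriv (deriv q) x) x :=
      (hq1.differentiable (by norm_num) x).hasDerivAt
    have h1 := hdq'.pow 2
    have h2 := ((hdq.pow 2).sub_const 4).pow 2
    have h3 := h1.sub (h2.const_mul (lam ^ 2 / 2))
    refine h3.congr_deriv ?_
    simp only [Pi.pow_apply]
    rw [hqode x hx]
    ring
  have hconst := constant_of_has_deriv_right_zero hEcont
    (fun x hx => (hEderiv x (Set.Ico_subset_Icc_self hx)).hasDerivWithinAt)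
  intro x hx
  have := hconst x hx
  simp only [hE_def, hqbc1] at this
  nlinarith [this]

lemma derivNeg (lam : ℝ) (q : ℝ → ℝ) (hq : ContDiff ℝ 2 q)
    (hqode : ∀ x ∈ Set.Icc (-1 : ℝ) 1,
      deriv (deriv q) x = lam ^ 2 * (((q x) ^ 2 - 4) * q x))
    (hqbc1 : q (-1) = 2) (hqbc2 : q 1 = -2) :
    ∀ x ∈ Set.Icc (-1 : ℝ) 1, deriv q x < 0 := by
  have hq1 : ContDiff ℝ 1 (deriv q) := by
    have := (contDiff_succ_iff_deriv.mp (show ContDiff ℝ (1 + 1) q by norm_num [hq])).2.2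
    exact this
  have hEn := energy lam q hq hqode hqbc1
  -- deriv q (-1) ≠ 0
  have ha : deriv q (-1) ≠ 0 := by
    intro ha
    have hc : ContDiff ℝ 2 (fun _ : ℝ => (2 : ℝ)) := contDiff_const
    have hcode : ∀ x ∈ Set.Icc (-1 : ℝ) 1,
        deriv (deriv (fun _ : ℝ => (2:ℝ))) x = lam ^ 2 * ((((2:ℝ)) ^ 2 - 4) * 2) := by
      intro x _
      have h2 : deriv (fun _:ℝ => (2:ℝ)) = fun _ => 0 := by funext y; simp
      rw [h2]
      norm_num
    have := sysUnique lam q (fun _ => 2) hq hc hqode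
      (by intro x hx; simpa using hcode x hx)
      (by simpa using hqbc1) (by simp [deriv_const, ha])
    have h1 := this (Set.right_mem_Icc.mpr (by norm_num))
    simp [hqbc2] at h1
    norm_num at h1
  -- deriv q never zero on Icc
  have hne : ∀ x ∈ Set.Icc (-1 : ℝ) 1, deriv q x ≠ 0 := by
    intro x hx h0
    have := hEn x hx
    rw [h0] at this
    nlinarith [sq_nonneg (deriv q (-1)), sq_nonneg ((q x)^2 - 4), sq_abs (deriv q (-1)),
      sq_pos_of_ne_zero ha, sq_nonneg (lam * ((q x)^2 - 4))]
  -- somewhere negative: MVT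
  obtain ⟨c, hc, hc'⟩ := exists_deriv_eq_slope q (by norm_num : (-1:ℝ) < 1)
    (hq.continuous.continuousOn) ((hq.differentiable (by norm_num)).differentiableOn)
  rw [hqbc2, hqbc1] at hc'
  have hcneg : deriv q c < 0 := by rw [hc']; norm_num
  -- conclude by IVT
  intro x hx
  rcases lt_or_ge (deriv q x) 0 with h | h
  · exact h
  · exfalso
    have hxpos : 0 < deriv q x := lt_of_le_of_ne h (Ne.symm (hne x hx))
    have hccc : c ∈ Set.Icc (-1:ℝ) 1 := Set.mem_Icc.mpr ⟨hc.1.le, hc.2.le⟩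
    have hcont : ContinuousOn (deriv q) (Set.uIcc c x) := hq1.continuous.continuousOn
    have h0mem : (0:ℝ) ∈ Set.uIcc (deriv q c) (deriv q x) :=
      Set.mem_uIcc.mpr (Or.inl ⟨hcneg.le, hxpos.le⟩)
    obtain ⟨y, hy, hy0⟩ := intermediate_value_uIcc hcont h0mem
    have hyIcc : y ∈ Set.Icc (-1:ℝ) 1 := by
      rcases Set.mem_uIcc.mp hy with ⟨h1, h2⟩ | ⟨h1, h2⟩
      · exact ⟨le_trans hccc.1 h1, le_trans h2 hx.2⟩
      · exact ⟨le_trans hx.1 h1, le_trans h2 hccc.2⟩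
    exact hne y hyIcc hy0

lemma sqrt_formula (lam : ℝ) (q : ℝ → ℝ) (hq : ContDiff ℝ 2 q)
    (hqode : ∀ x ∈ Set.Icc (-1 : ℝ) 1,
      deriv (deriv q) x = lam ^ 2 * (((q x) ^ 2 - 4) * q x))
    (hqbc1 : q (-1) = 2) (hqbc2 : q 1 = -2) :
    ∀ x ∈ Set.Icc (-1 : ℝ) 1,
      deriv q x = -Real.sqrt (lam ^ 2 / 2 * ((q x) ^ 2 - 4) ^ 2 + (deriv q (-1)) ^ 2) := by
  intro x hx
  have h2 := energy lam q hq hqode hqbc1 x hx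
  have hneg := derivNeg lam q hq hqode hqbc1 hqbc2 x hx
  have : Real.sqrt (lam ^ 2 / 2 * ((q x) ^ 2 - 4) ^ 2 + (deriv q (-1)) ^ 2)
      = -(deriv q x) := by
    rw [← h2, Real.sqrt_sq_eq_abs, abs_of_neg hneg]
  linarith

lemma no_cross (lam : ℝ) (q r : ℝ → ℝ) (hq : ContDiff ℝ 2 q) (hr : ContDiff ℝ 2 r)
    (hqode : ∀ x ∈ Set.Icc (-1 : ℝ) 1,
      deriv (deriv q) x = lam ^ 2 * (((q x) ^ 2 - 4) * q x))
    (hrode : ∀ x ∈ Set.Icc (-1 : ℝ) 1,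
      deriv (deriv r) x = lam ^ 2 * (((r x) ^ 2 - 4) * r x))
    (hqbc1 : q (-1) = 2) (hqbc2 : q 1 = -2)
    (hrbc1 : r (-1) = 2) (hrbc2 : r 1 = -2)
    (hab : deriv q (-1) < deriv r (-1)) : False := by
  set a := deriv q (-1) with ha_def
  set b := deriv r (-1) with hb_def
  have ha : a < 0 := derivNeg lam q hq hqode hqbc1 hqbc2 (-1) (by norm_num)
  have hb : b < 0 := derivNeg lam r hr hrode hrbc1 hrbc2 (-1) (by norm_num)
  have hb2a2 : b ^ 2 < a ^ 2 := by nlinarith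
  have hqs := sqrt_formula lam q hq hqode hqbc1 hqbc2
  have hrs := sqrt_formula lam r hr hrode hrbc1 hrbc2
  set d : ℝ → ℝ := fun x => r x - q x with hd_def
  have hd0 : d (-1) = 0 := by simp [hd_def, hqbc1, hrbc1]
  have hd1 : d 1 = 0 := by simp [hd_def, hqbc2, hrbc2]
  have hdcont : Continuous d := hr.continuous.sub hq.continuous
  have hdAt : ∀ x : ℝ, HasDerivAt d (deriv r x - deriv q x) x := fun x =>
    ((hr.differentiable (by norm_num) x).hasDerivAt).sub
      ((hq.differentiable (by norm_num) x).hasDerivAt)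
  -- d is positive just to the right of -1
  have hev : ∀ᶠ y in nhdsWithin (-1 : ℝ) {(-1:ℝ)}ᶜ, 0 < slope d (-1) y :=
    (hasDerivAt_iff_tendsto_slope.mp (hdAt (-1))).eventually
      (eventually_gt_nhds (by linarith : (0:ℝ) < deriv r (-1) - deriv q (-1)))
  have hev' : ∀ᶠ y in nhdsWithin (-1 : ℝ) (Set.Ioi (-1)), 0 < d y := by
    filter_upwards [hev.filter_mono (nhdsWithin_mono _ (fun y hy => ne_of_gt hy)),
      self_mem_nhdsWithin] with y hs hy
    have hy1 : (0:ℝ) < y + 1 := by have := Set.mem_Ioi.mp hy; linarith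
    have hslope : slope d (-1) y = d y / (y + 1) := by
      rw [slope_def_field, hd0]
      ring_nf
    rw [hslope] at hs
    rcases div_pos_iff.mp hs with ⟨h1, _⟩ | ⟨_, h2⟩
    · exact h1
    · linarith
  obtain ⟨u, hu, hsub⟩ := mem_nhdsGT_iff_exists_Ioc_subset.mp hev'
  have hu' : (-1:ℝ) < u := hu
  have hu1 : u < 1 := by
    by_contra h
    push_neg at h
    have h1 : (1:ℝ) ∈ Set.Ioc (-1:ℝ) u := ⟨by norm_num, h⟩
    have := hsub h1
    simp only [Set.mem_setOf_eq] at this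
    linarith [hd1]
  -- first crossing point
  set S : Set ℝ := {x | x ∈ Set.Icc u 1 ∧ d x ≤ 0} with hS_def
  have hSclosed : IsClosed S := by
    have : S = Set.Icc u 1 ∩ d ⁻¹' (Set.Iic 0) := rfl
    rw [this]
    exact isClosed_Icc.inter (isClosed_Iic.preimage hdcont)
  have hSne : S.Nonempty := ⟨1, ⟨hu1.le, le_rfl⟩, hd1.le⟩
  have hSbdd : BddBelow S := ⟨u, fun y hy => hy.1.1⟩
  set x₀ := sInf S with hx₀_def
  have hx₀S : x₀ ∈ S := hSclosed.csInf_mem hSne hSbdd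
  have hx₀gt : (-1:ℝ) < x₀ := lt_of_lt_of_le hu' hx₀S.1.1
  have hx₀Icc : x₀ ∈ Set.Icc (-1:ℝ) 1 := ⟨hx₀gt.le, hx₀S.1.2⟩
  have hlt : ∀ y ∈ Set.Ioo (-1:ℝ) x₀, 0 < d y := by
    intro y hy
    rcases le_or_gt y u with h | h
    · exact hsub ⟨hy.1, h⟩
    · by_contra hc
      push_neg at hc
      have hyS : y ∈ S := ⟨⟨h.le, le_trans hy.2.le hx₀S.1.2⟩, hc⟩
      have := csInf_le hSbdd hyS
      linarith [hy.2]
  have hd_x₀ : d x₀ = 0 := by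
    refine le_antisymm hx₀S.2 ?_
    have htend : Filter.Tendsto d (nhdsWithin x₀ (Set.Iio x₀)) (nhds (d x₀)) :=
      (hdcont.continuousAt).continuousWithinAt.tendsto
    refine ge_of_tendsto htend ?_
    filter_upwards [Ioo_mem_nhdsLT_of_mem (Set.mem_Ioc.mpr ⟨hx₀gt, le_rfl⟩)] with y hy
    exact (hlt y hy).le
  have hqr : q x₀ = r x₀ := by
    have : r x₀ - q x₀ = 0 := hd_x₀
    linarith
  -- derivative of d at x₀ is positive
  have hm₀ : 0 < deriv r x₀ - deriv q x₀ := by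
    have h1 := hqs x₀ hx₀Icc
    have h2 := hrs x₀ hx₀Icc
    rw [← hqr] at h2
    rw [h1, h2]
    have hsq : Real.sqrt (lam ^ 2 / 2 * ((q x₀) ^ 2 - 4) ^ 2 + b ^ 2)
        < Real.sqrt (lam ^ 2 / 2 * ((q x₀) ^ 2 - 4) ^ 2 + a ^ 2) := by
      apply Real.sqrt_lt_sqrt
      · positivity
      · linarith
    linarith
  -- but d must then be negative just to the left of x₀
  have hev₀ : ∀ᶠ y in nhdsWithin x₀ {x₀}ᶜ, 0 < slope d x₀ y :=
    (hasDerivAt_iff_tendsto_slope.mp (hdAt x₀)).eventually (eventually_gt_nhds hm₀)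
  have hmem : Set.Ioo (-1:ℝ) x₀ ∈ nhdsWithin x₀ (Set.Iio x₀) :=
    Ioo_mem_nhdsLT_of_mem (Set.mem_Ioc.mpr ⟨hx₀gt, le_rfl⟩)
  haveI : (nhdsWithin x₀ (Set.Iio x₀)).NeBot := nhdsLT_neBot x₀
  have hcomb := ((hev₀.filter_mono (nhdsWithin_mono x₀
    (show Set.Iio x₀ ⊆ {x₀}ᶜ from fun y hy => ne_of_lt hy))).and
    (Filter.eventually_of_mem hmem (fun y hy => hy))).exists
  obtain ⟨y, hs, hyIoo⟩ := hcomb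
  have hslope : slope d x₀ y = d y / (y - x₀) := by
    rw [slope_def_field, hd_x₀]
    ring_nf
  rw [hslope] at hs
  have hyx : y - x₀ < 0 := by linarith [hyIoo.2]
  rcases div_pos_iff.mp hs with ⟨_, h2⟩ | ⟨h1, _⟩
  · linarith
  · linarith [hlt y hyIoo]


/-- For each `λ > 0`, the boundary value problem `(1/λ²) q'' = (q² − 4) q` on
`(−1,1)`, `q(−1) = 2`, `q(1) = −2`, has at most one `C²` solution. -/
theorem bvp_uniqueness (lam : ℝ) (hlam : 0 < lam)
    (q r : ℝ → ℝ) (hq : ContDiff ℝ 2 q) (hr : ContDiff ℝ 2 r)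
    (hqode : ∀ x ∈ Set.Icc (-1 : ℝ) 1,
      (1 / lam ^ 2) * deriv (deriv q) x = ((q x) ^ 2 - 4) * q x)
    (hrode : ∀ x ∈ Set.Icc (-1 : ℝ) 1,
      (1 / lam ^ 2) * deriv (deriv r) x = ((r x) ^ 2 - 4) * r x)
    (hqbc1 : q (-1) = 2) (hqbc2 : q 1 = -2)
    (hrbc1 : r (-1) = 2) (hrbc2 : r 1 = -2) :
    Set.EqOn q r (Set.Icc (-1 : ℝ) 1) := by
  have hlam2 : lam ^ 2 ≠ 0 := by positivity
  have hqode' : ∀ x ∈ Set.Icc (-1 : ℝ) 1,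
      deriv (deriv q) x = lam ^ 2 * (((q x) ^ 2 - 4) * q x) := by
    intro x hx
    have := hqode x hx
    field_simp at this
    linarith
  have hrode' : ∀ x ∈ Set.Icc (-1 : ℝ) 1,
      deriv (deriv r) x = lam ^ 2 * (((r x) ^ 2 - 4) * r x) := by
    intro x hx
    have := hrode x hx
    field_simp at this
    linarith
  rcases lt_trichotomy (deriv q (-1)) (deriv r (-1)) with h | h | h
  · exact absurd (no_cross lam q r hq hr hqode' hrode' hqbc1 hqbc2 hrbc1 hrbc2 h) (by simp)
  · exact sysUnique lam q r hq hr hqode' hrode' (by rw [hqbc1, hrbc1]) h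
  · exact absurd (no_cross lam r q hr hq hrode' hqode' hrbc1 hrbc2 hqbc1 hqbc2 h) (by simp)
end

section
/- For each λ > 0, the unique solution q of the boundary value problem (1/λ²) q'' = (q² − 4) q on (−1,1), q(−1) = 2, q(1) = −2, is odd: q(−x) = −q(x) for all x ∈ [−1,1]. -/
open Set Metric

/-- Uniqueness (backwards from time 1) for the autonomous system `y' = V y` on `[-1,1]`,
for `C¹` vector fields `V`. -/
lemma ode_unique_sys (V : ℝ × ℝ → ℝ × ℝ) (hV : ContDiff ℝ 1 V)
    (f g : ℝ → ℝ × ℝ)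
    (hf : ∀ x ∈ Set.Icc (-1:ℝ) 1, HasDerivAt f (V (f x)) x)
    (hg : ∀ x ∈ Set.Icc (-1:ℝ) 1, HasDerivAt g (V (g x)) x)
    (heq : f 1 = g 1) : Set.EqOn f g (Set.Icc (-1:ℝ) 1) := by
  have hfc : ContinuousOn f (Icc (-1:ℝ) 1) :=
    fun x hx => (hf x hx).continuousAt.continuousWithinAt
  have hgc : ContinuousOn g (Icc (-1:ℝ) 1) :=
    fun x hx => (hg x hx).continuousAt.continuousWithinAt
  obtain ⟨Rf, hRf⟩ := (isCompact_Icc.image_of_continuousOn hfc).isBounded.subset_closedBall 0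
  obtain ⟨Rg, hRg⟩ := (isCompact_Icc.image_of_continuousOn hgc).isBounded.subset_closedBall 0
  set R : ℝ := max Rf Rg with hR
  have hfs : ∀ x ∈ Icc (-1:ℝ) 1, f x ∈ closedBall (0:ℝ×ℝ) R := fun x hx =>
    closedBall_subset_closedBall (le_max_left _ _) (hRf ⟨x, hx, rfl⟩)
  have hgs : ∀ x ∈ Icc (-1:ℝ) 1, g x ∈ closedBall (0:ℝ×ℝ) R := fun x hx =>
    closedBall_subset_closedBall (le_max_right _ _) (hRg ⟨x, hx, rfl⟩)
  obtain ⟨C, hC⟩ := (isCompact_closedBall (0:ℝ×ℝ) R).exists_bound_of_continuousOn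
    (hV.continuous_fderiv one_ne_zero).continuousOn
  have hlip : LipschitzOnWith C.toNNReal V (closedBall (0:ℝ×ℝ) R) := by
    apply (convex_closedBall (0:ℝ×ℝ) R).lipschitzOnWith_of_nnnorm_fderiv_le
      (fun x _ => (hV.differentiable one_ne_zero).differentiableAt)
    intro x hx
    rw [← NNReal.coe_le_coe, coe_nnnorm, Real.coe_toNNReal']
    exact le_trans (hC x hx) (le_max_left _ _)
  exact ODE_solution_unique_of_mem_Icc_left (fun _ _ => hlip)
    hfc (fun t ht => (hf t ⟨ht.1.le, ht.2⟩).hasDerivWithinAt)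
    (fun t ht => hfs t ⟨ht.1.le, ht.2⟩)
    hgc (fun t ht => (hg t ⟨ht.1.le, ht.2⟩).hasDerivWithinAt)
    (fun t ht => hgs t ⟨ht.1.le, ht.2⟩) heq

/-- The (unique) `C²` solution of `(1/λ²) q'' = (q² − 4) q` on `(−1,1)` with
`q(−1) = 2`, `q(1) = −2` is odd: `q(−x) = −q(x)` for all `x ∈ [−1,1]`. -/
theorem bvp_solution_odd (lam : ℝ) (hlam : 0 < lam)
    (q : ℝ → ℝ) (hq : ContDiff ℝ 2 q)
    (hode : ∀ x ∈ Set.Icc (-1 : ℝ) 1,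
      (1 / lam ^ 2) * deriv (deriv q) x = ((q x) ^ 2 - 4) * q x)
    (hbc1 : q (-1) = 2) (hbc2 : q 1 = -2) :
    ∀ x ∈ Set.Icc (-1 : ℝ) 1, q (-x) = - q x := by
  have hlam2 : (0:ℝ) < lam ^ 2 := by positivity
  set p : ℝ → ℝ := deriv q with hp
  have h2 : (2 : WithTop ℕ∞) = 1 + 1 := by rfl
  rw [h2] at hq
  have hpc1 : ContDiff ℝ 1 p := (contDiff_succ_iff_deriv.mp hq).2.2
  have hqdiff : Differentiable ℝ q := (contDiff_succ_iff_deriv.mp hq).1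
  have hqd : ∀ x, HasDerivAt q (p x) x := fun x => (hqdiff x).hasDerivAt
  have hpd : ∀ x, HasDerivAt p (deriv p x) x :=
    fun x => (hpc1.differentiable one_ne_zero x).hasDerivAt
  have hode' : ∀ x ∈ Icc (-1:ℝ) 1, deriv p x = lam ^ 2 * (((q x) ^ 2 - 4) * q x) := by
    intro x hx
    have h := hode x hx
    field_simp at h
    linear_combination h
  -- the first-order system
  set V : ℝ × ℝ → ℝ × ℝ := fun y => (y.2, lam ^ 2 * ((y.1 ^ 2 - 4) * y.1)) with hV
  have hVc : ContDiff ℝ 1 V := by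
    apply ContDiff.prodMk
    · exact contDiff_snd
    · fun_prop
  set f : ℝ → ℝ × ℝ := fun x => (q x, p x) with hf
  have hfsol : ∀ x ∈ Icc (-1:ℝ) 1, HasDerivAt f (V (f x)) x := by
    intro x hx
    have := (hqd x).prodMk (hpd x)
    simpa [hf, hV, hode' x hx] using this
  -- energy is constant
  set Ef : ℝ → ℝ := fun x => (p x) ^ 2 - lam ^ 2 * ((q x) ^ 2 - 4) ^ 2 / 2 with hEf
  have hEd : ∀ x ∈ Icc (-1:ℝ) 1, HasDerivAt Ef 0 x := by
    intro x hx
    have h1 := (hpd x).pow 2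
    have h2 := ((((hqd x).pow 2).sub_const 4).pow 2).const_mul (lam ^ 2)
    have h3 := h1.sub (h2.div_const 2)
    convert h3 using 1
    · rfl
    · rfl
    · rfl
    rw [hode' x hx]
    norm_num
    ring
  have hEcont : ContinuousOn Ef (Icc (-1:ℝ) 1) :=
    fun x hx => (hEd x hx).continuousAt.continuousWithinAt
  have hEconst : ∀ x ∈ Icc (-1:ℝ) 1, Ef x = Ef (-1) :=
    constant_of_has_deriv_right_zero hEcont
      (fun x hx => (hEd x ⟨hx.1, hx.2.le⟩).hasDerivWithinAt)
  have h1m : (1:ℝ) ∈ Icc (-1:ℝ) 1 := by norm_num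
  have hm1m : (-1:ℝ) ∈ Icc (-1:ℝ) 1 := by norm_num
  have hsq : p (-1) ^ 2 = p 1 ^ 2 := by
    have h := hEconst 1 h1m
    simp only [hEf, hbc1, hbc2] at h
    nlinarith [h]
  -- p 1 ≠ 0
  have hp1ne : p 1 ≠ 0 := by
    intro h0
    set c : ℝ → ℝ × ℝ := fun _ => ((-2 : ℝ), (0 : ℝ)) with hc
    have hcsol : ∀ x ∈ Icc (-1:ℝ) 1, HasDerivAt c (V (c x)) x := by
      intro x hx
      have : V ((-2 : ℝ), (0 : ℝ)) = (0, 0) := by norm_num [hV]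
      rw [hc]
      show HasDerivAt _ (V ((-2 : ℝ), (0 : ℝ))) x
      rw [this]
      exact hasDerivAt_const x ((-2 : ℝ), (0 : ℝ))
    have heq1 : f 1 = c 1 := by simp [hf, hc, hbc2, h0]
    have := ode_unique_sys V hVc f c hfsol hcsol heq1 hm1m
    simp only [hf, hc, Prod.mk.injEq] at this
    linarith [this.1, hbc1]
  have hp1sq : 0 < p 1 ^ 2 := lt_of_le_of_ne (sq_nonneg _) (Ne.symm (pow_ne_zero 2 hp1ne))
  -- p never vanishes on [-1,1]
  have hpne : ∀ x ∈ Icc (-1:ℝ) 1, p x ≠ 0 := by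
    intro x hx h0
    have h := hEconst x hx
    have h1 := hEconst 1 h1m
    simp only [hEf, hbc2, h0] at h h1
    nlinarith [sq_nonneg ((q x) ^ 2 - 4), hp1sq]
  -- p(-1) = p(1) by sign considerations
  have hfin : p (-1) = p 1 := by
    have hfact : (p (-1) - p 1) * (p (-1) + p 1) = 0 := by nlinarith [hsq]
    rcases mul_eq_zero.mp hfact with h | h
    · linarith
    · exfalso
      have hpm1 : p (-1) = -p 1 := by linarith
      have hpcont : ContinuousOn p (Icc (-1:ℝ) 1) := (hpc1.continuous).continuousOn
      rcases lt_or_gt_of_ne hp1ne with hneg | hpos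
      · -- p 1 < 0, p(-1) = -p 1 > 0 : IVT gives a zero
        have h0mem : (0:ℝ) ∈ Icc (p 1) (p (-1)) := ⟨hneg.le, by linarith⟩
        obtain ⟨x, hx, hx0⟩ := intermediate_value_Icc' (by norm_num : (-1:ℝ) ≤ 1) hpcont h0mem
        exact hpne x hx hx0
      · have h0mem : (0:ℝ) ∈ Icc (p (-1)) (p 1) := ⟨by linarith, hpos.le⟩
        obtain ⟨x, hx, hx0⟩ := intermediate_value_Icc (by norm_num : (-1:ℝ) ≤ 1) hpcont h0mem
        exact hpne x hx hx0
  -- the reflected solution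
  set g : ℝ → ℝ × ℝ := fun x => (-q (-x), p (-x)) with hg
  have hgsol : ∀ x ∈ Icc (-1:ℝ) 1, HasDerivAt g (V (g x)) x := by
    intro x hx
    have hxm : -x ∈ Icc (-1:ℝ) 1 := ⟨by linarith [hx.2], by linarith [hx.1]⟩
    have hq1 : HasDerivAt (fun y => -q (-y)) (p (-x)) x := by
      have := ((hqd (-x)).comp x (hasDerivAt_neg x)).neg
      simp at this
      exact this
    have hq2 : HasDerivAt (fun y => p (-y)) (-(deriv p (-x))) x := by
      have := (hpd (-x)).comp x (hasDerivAt_neg x)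
      simp at this
      exact this
    have := hq1.prodMk hq2
    have hval : V (g x) = (p (-x), -(deriv p (-x))) := by
      simp only [hg, hV, hode' (-x) hxm, Prod.mk.injEq]
      exact ⟨trivial, by ring⟩
    rw [hval]
    exact this
  have heqg : g 1 = f 1 := by
    simp [hg, hf, hbc1, hbc2, hfin]
  have hEq := ode_unique_sys V hVc g f hgsol hfsol heqg
  intro x hx
  have := hEq hx
  simp only [hg, hf, Prod.mk.injEq] at this
  linarith [this.1]
end

section
/- Let q : ℝ → ℝ be a C² solution of q'' = (q² − 4)q on the real line with finite energy ∫_ℝ [(q')² + (q² − 4)²] dx < ∞, odd, nonincreasing, and satisfying q(−∞) = 2, q(+∞) = −2. Then h = q' is nonzero, belongs to H¹(ℝ), solves h'' = (3q² − 4)h, and satisfies ∫_ℝ [(h')² + (q² − 4)h²] dx = −2 ∫_ℝ q² h² dx < 0. In particular the Schrödinger-type quadratic form h ↦ ∫ [(h')² + (q²−4)h²] has a negative direction. -/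
open MeasureTheory Filter

/-- Let `q : ℝ → ℝ` be a `C²`, odd, nonincreasing, finite-energy solution of
`q'' = (q² − 4)q` on the line with `q(−∞) = 2`, `q(+∞) = −2`. Then `h = q'` is
nonzero, belongs to `H¹(ℝ)`, solves the linearized equation `h'' = (3q² − 4)h`, and
`∫ [(h')² + (q² − 4)h²] = −2 ∫ q² h² < 0`; in particular the Schrödinger-type
quadratic form `h ↦ ∫ [(h')² + (q²−4)h²]` has a negative direction. -/
theorem heteroclinic_negative_direction (q : ℝ → ℝ) (hq : ContDiff ℝ 2 q)
    (hode : ∀ x : ℝ, deriv (deriv q) x = ((q x) ^ 2 - 4) * q x)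
    (hE1 : Integrable (fun x => (deriv q x) ^ 2))
    (hE2 : Integrable (fun x => ((q x) ^ 2 - 4) ^ 2))
    (hodd : ∀ x : ℝ, q (-x) = - q x)
    (hmono : Antitone q)
    (hlim1 : Tendsto q atBot (nhds 2))
    (hlim2 : Tendsto q atTop (nhds (-2))) :
    (deriv q ≠ 0) ∧
    Integrable (fun x => (deriv q x) ^ 2) ∧
    Integrable (fun x => (deriv (deriv q) x) ^ 2) ∧
    (∀ x : ℝ, deriv (deriv (deriv q)) x = (3 * (q x) ^ 2 - 4) * deriv q x) ∧
    (∫ x : ℝ, ((deriv (deriv q) x) ^ 2 + ((q x) ^ 2 - 4) * (deriv q x) ^ 2)) =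
      -2 * ∫ x : ℝ, (q x) ^ 2 * (deriv q x) ^ 2 ∧
    (∫ x : ℝ, ((deriv (deriv q) x) ^ 2 + ((q x) ^ 2 - 4) * (deriv q x) ^ 2)) < 0 := by
  have hq1 : Differentiable ℝ q := hq.differentiable two_ne_zero
  have hqc : Continuous q := hq1.continuous
  have hdq : ContDiff ℝ 1 (deriv q) := by
    have h2 : ContDiff ℝ ((1 : ℕ) + 1) q := by exact_mod_cast hq
    exact (contDiff_succ_iff_deriv.mp h2).2.2
  have hdq1 : Differentiable ℝ (deriv q) := hdq.differentiable one_ne_zero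
  have hcont_h : Continuous (deriv q) := hdq1.continuous
  have hD1 : ∀ x, HasDerivAt q (deriv q x) x := fun x => (hq1 x).hasDerivAt
  have hD2 : ∀ x, HasDerivAt (deriv q) (deriv (deriv q) x) x := fun x => (hdq1 x).hasDerivAt
  -- bounds on q
  have hub : ∀ x, q x ≤ 2 :=
    fun x => ge_of_tendsto hlim1 ((eventually_le_atBot x).mono fun y hy => hmono hy)
  have hlb : ∀ x, -2 ≤ q x :=
    fun x => le_of_tendsto hlim2 ((eventually_ge_atTop x).mono fun y hy => hmono hy)
  have hsq : ∀ x, (q x) ^ 2 ≤ 4 := fun x => by nlinarith [hub x, hlb x]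
  have hq0 : q 0 = 0 := by have := hodd 0; rw [neg_zero] at this; linarith
  -- limits of (q^2-4)^2
  have hwtop : Tendsto (fun x => ((q x) ^ 2 - 4) ^ 2) atTop (nhds 0) := by
    have h := (((hlim2.pow 2).sub_const 4).pow 2)
    convert h using 2
    norm_num
  have hwbot : Tendsto (fun x => ((q x) ^ 2 - 4) ^ 2) atBot (nhds 0) := by
    have h := (((hlim1.pow 2).sub_const 4).pow 2)
    convert h using 2
    norm_num
  -- energy conservation: F := (q')^2 - ((q^2-4)^2)/2 is constant
  have hF : ∀ x, HasDerivAt (fun y => (deriv q y) ^ 2 - ((q y) ^ 2 - 4) ^ 2 / 2) 0 x := by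
    intro x
    have h1 := (hD2 x).pow 2
    have h2 := ((((hD1 x).pow 2).sub_const 4).pow 2).div_const 2
    have h3 := h1.sub h2
    refine h3.congr_deriv ?_
    rw [hode x]; push_cast [Pi.pow_apply]; ring
  obtain ⟨c, hFc⟩ : ∃ c : ℝ, ∀ x, (deriv q x) ^ 2 - ((q x) ^ 2 - 4) ^ 2 / 2 = c :=
    ⟨(deriv q 0) ^ 2 - ((q 0) ^ 2 - 4) ^ 2 / 2,
      fun x => is_const_of_deriv_eq_zero (fun y => (hF y).differentiableAt)
        (fun y => (hF y).deriv) x 0⟩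
  have hc0 : c = 0 := by
    have hcge : 0 ≤ c := by
      have hten : Tendsto (fun x => -((q x) ^ 2 - 4) ^ 2 / 2) atTop (nhds 0) := by
        have := (hwtop.neg).div_const 2
        simpa using this
      refine le_of_tendsto hten (Eventually.of_forall fun x => ?_)
      linarith [hFc x, sq_nonneg (deriv q x)]
    rcases hcge.eq_or_lt with h | hpos
    · exact h.symm
    · exfalso
      have hint : Integrable (fun _ : ℝ => c) := by
        refine hE1.mono' aestronglyMeasurable_const (ae_of_all _ fun x => ?_)
        rw [Real.norm_eq_abs, abs_of_pos hpos]
        linarith [hFc x, sq_nonneg ((q x) ^ 2 - 4)]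
      rw [integrable_const_iff] at hint
      rcases hint with h | h
      · exact hpos.ne' h
      · exact absurd h.measure_univ_lt_top (by simp)
  -- pointwise energy identity
  have key : ∀ x, (deriv q x) ^ 2 = ((q x) ^ 2 - 4) ^ 2 / 2 := by
    intro x; linarith [hFc x, hc0]
  -- bound on q'
  have habs : ∀ x, |deriv q x| ≤ 3 := by
    intro x
    have h1 := key x
    have h2 := hsq x
    have h3 := sq_nonneg (q x)
    rw [abs_le]; constructor <;> nlinarith [sq_nonneg (deriv q x + 3), sq_nonneg (deriv q x - 3)]
  -- claim 1
  have claim1 : deriv q ≠ 0 := by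
    intro h
    have h0 : deriv q 0 = 0 := by rw [h]; rfl
    have := key 0
    rw [h0, hq0] at this
    norm_num at this
  -- the function q'' as an explicit expression
  have e2 : deriv (deriv q) = fun x => ((q x) ^ 2 - 4) * q x := funext hode
  -- claim 3
  have claim3 : Integrable (fun x => (deriv (deriv q) x) ^ 2) := by
    rw [e2]
    refine (hE2.const_mul 4).mono'
      ((((hqc.pow 2).sub continuous_const).mul hqc).pow 2).aestronglyMeasurable
      (ae_of_all _ fun x => ?_)
    rw [Real.norm_eq_abs, abs_of_nonneg (sq_nonneg _)]
    beta_reduce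
    nlinarith [mul_nonneg (sq_nonneg ((q x) ^ 2 - 4)) (sub_nonneg.2 (hsq x))]
  -- claim 4 : third derivative
  have hD3 : ∀ x, HasDerivAt (deriv (deriv q))
      ((3 * (q x) ^ 2 - 4) * deriv q x) x := by
    intro x
    rw [e2]
    have h1 := (((hD1 x).pow 2).sub_const 4).mul (hD1 x)
    refine h1.congr_deriv ?_
    push_cast [Pi.pow_apply]; ring
  have claim4 : ∀ x : ℝ, deriv (deriv (deriv q)) x = (3 * (q x) ^ 2 - 4) * deriv q x :=
    fun x => (hD3 x).deriv
  -- integrability of auxiliary functions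
  have hI32 : Integrable (fun x => (3 * (q x) ^ 2 - 4) * (deriv q x) ^ 2) := by
    refine (hE1.const_mul 8).mono'
      (((continuous_const.mul (hqc.pow 2)).sub continuous_const).mul (hcont_h.pow 2)).aestronglyMeasurable
      (ae_of_all _ fun x => ?_)
    rw [Real.norm_eq_abs, abs_mul, abs_of_nonneg (sq_nonneg (deriv q x))]
    have h1 : |3 * (q x) ^ 2 - 4| ≤ 8 := by
      rw [abs_le]; constructor <;> nlinarith [hsq x, sq_nonneg (q x)]
    nlinarith [sq_nonneg (deriv q x), abs_nonneg (3 * (q x) ^ 2 - 4)]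
  have hIG : Integrable (fun x => (deriv (deriv q) x) ^ 2
      + (3 * (q x) ^ 2 - 4) * (deriv q x) ^ 2) := claim3.add hI32
  have hIq2h2 : Integrable (fun x => (q x) ^ 2 * (deriv q x) ^ 2) := by
    refine (hE1.const_mul 4).mono'
      ((hqc.pow 2).mul (hcont_h.pow 2)).aestronglyMeasurable
      (ae_of_all _ fun x => ?_)
    rw [Real.norm_eq_abs, abs_of_nonneg (mul_nonneg (sq_nonneg _) (sq_nonneg _))]
    nlinarith [mul_nonneg (sq_nonneg (deriv q x)) (sub_nonneg.2 (hsq x))]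
  -- the function Φ = q' * q'' and its derivative
  have hDPhi : ∀ x, HasDerivAt (fun y => deriv q y * deriv (deriv q) y)
      ((deriv (deriv q) x) ^ 2 + (3 * (q x) ^ 2 - 4) * (deriv q x) ^ 2) x := by
    intro x
    have h1 := (hD2 x).mul (hD3 x)
    refine h1.congr_deriv ?_
    ring
  -- Φ tends to 0 at ±∞
  have hbound : ∀ x, ‖deriv q x * deriv (deriv q) x‖ ≤ 6 * |(q x) ^ 2 - 4| := by
    intro x
    rw [hode x, Real.norm_eq_abs, abs_mul, abs_mul]
    have h1 := habs x
    have h2 : |q x| ≤ 2 := abs_le.2 ⟨hlb x, hub x⟩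
    calc |deriv q x| * (|(q x) ^ 2 - 4| * |q x|)
        ≤ 3 * (|(q x) ^ 2 - 4| * 2) := by gcongr
      _ = 6 * |(q x) ^ 2 - 4| := by ring
  have habstop : Tendsto (fun x => 6 * |(q x) ^ 2 - 4|) atTop (nhds 0) := by
    have h1 : Tendsto (fun x => (q x) ^ 2 - 4) atTop (nhds 0) := by
      have h := (hlim2.pow 2).sub_const 4
      convert h using 2
      norm_num
    have := (h1.abs).const_mul (6:ℝ)
    simpa using this
  have habsbot : Tendsto (fun x => 6 * |(q x) ^ 2 - 4|) atBot (nhds 0) := by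
    have h1 : Tendsto (fun x => (q x) ^ 2 - 4) atBot (nhds 0) := by
      have h := (hlim1.pow 2).sub_const 4
      convert h using 2
      norm_num
    have := (h1.abs).const_mul (6:ℝ)
    simpa using this
  have hPhitop : Tendsto (fun x => deriv q x * deriv (deriv q) x) atTop (nhds 0) :=
    squeeze_zero_norm hbound habstop
  have hPhibot : Tendsto (fun x => deriv q x * deriv (deriv q) x) atBot (nhds 0) :=
    squeeze_zero_norm hbound habsbot
  -- integral of G over ℝ is 0
  have hGIoi : ∫ x in Set.Ioi (0:ℝ),
      ((deriv (deriv q) x) ^ 2 + (3 * (q x) ^ 2 - 4) * (deriv q x) ^ 2)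
      = 0 - deriv q 0 * deriv (deriv q) 0 :=
    integral_Ioi_of_hasDerivAt_of_tendsto' (fun x _ => hDPhi x) hIG.integrableOn hPhitop
  have hGIic : ∫ x in Set.Iic (0:ℝ),
      ((deriv (deriv q) x) ^ 2 + (3 * (q x) ^ 2 - 4) * (deriv q x) ^ 2)
      = deriv q 0 * deriv (deriv q) 0 - 0 :=
    integral_Iic_of_hasDerivAt_of_tendsto' (fun x _ => hDPhi x) hIG.integrableOn hPhibot
  have hG0 : ∫ x : ℝ, ((deriv (deriv q) x) ^ 2 + (3 * (q x) ^ 2 - 4) * (deriv q x) ^ 2) = 0 := by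
    rw [← intervalIntegral.integral_Iic_add_Ioi (b := (0:ℝ)) hIG.integrableOn hIG.integrableOn, hGIoi, hGIic]
    ring
  -- main identity
  have claim5 : (∫ x : ℝ, ((deriv (deriv q) x) ^ 2 + ((q x) ^ 2 - 4) * (deriv q x) ^ 2)) =
      -2 * ∫ x : ℝ, (q x) ^ 2 * (deriv q x) ^ 2 := by
    have hsplit : (fun x => (deriv (deriv q) x) ^ 2 + ((q x) ^ 2 - 4) * (deriv q x) ^ 2)
        = fun x => ((deriv (deriv q) x) ^ 2 + (3 * (q x) ^ 2 - 4) * (deriv q x) ^ 2)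
          - 2 * ((q x) ^ 2 * (deriv q x) ^ 2) := by
      funext x; ring
    rw [hsplit, integral_sub hIG (hIq2h2.const_mul 2), hG0, integral_const_mul]
    ring
  -- positivity of ∫ q² (q')²
  have hpos : 0 < ∫ x : ℝ, (q x) ^ 2 * (deriv q x) ^ 2 := by
    -- find a point where q = -1
    have hev : ∀ᶠ x in atTop, q x < -1 := hlim2.eventually_lt_const (by norm_num)
    obtain ⟨x1, hx10, hx1⟩ := ((eventually_ge_atTop (0:ℝ)).and hev).exists
    have hsub := intermediate_value_Icc' hx10 hqc.continuousOn
    obtain ⟨xc, _, hxc⟩ := hsub ⟨hx1.le, by rw [hq0]; norm_num⟩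
    have hfc : (q xc) ^ 2 * (deriv q xc) ^ 2 = 9 / 2 := by
      rw [key xc, hxc]; norm_num
    rw [integral_pos_iff_support_of_nonneg_ae (ae_of_all _ fun x => by positivity) hIq2h2]
    have hopen : IsOpen {x : ℝ | 0 < (q x) ^ 2 * (deriv q x) ^ 2} :=
      isOpen_lt continuous_const ((hqc.pow 2).mul (hcont_h.pow 2))
    refine lt_of_lt_of_le (hopen.measure_pos volume ⟨xc, ?_⟩)
      (measure_mono fun x hx => ne_of_gt hx)
    show 0 < (q xc) ^ 2 * (deriv q xc) ^ 2
    rw [hfc]; norm_num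
  refine ⟨claim1, hE1, claim3, claim4, claim5, ?_⟩
  rw [claim5]
  linarith
end

section
/- Let f : ℝ → ℝ be continuous with f(−∞) = a and f(+∞) = b where a ≠ b, and suppose f is differentiable with f' ∈ L²(ℝ). Then f' is not identically zero. More generally: if g : ℝ → ℝ satisfies ∫_ℝ [g'(x)² + (g(x)² − 4)²] dx < ∞, g continuous, then g(x)² → 4 as |x| → ∞. -/
open MeasureTheory Filter

private lemma my_abs_arctan_le (t : ℝ) : |Real.arctan t| ≤ |t| := by
  have key : ∀ s : ℝ, 0 < s → Real.arctan s ≤ s := by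
    intro s hs
    have h1 : 0 < Real.arctan s := by simpa using Real.arctan_strictMono hs
    have h2 := Real.lt_tan h1 (Real.arctan_lt_pi_div_two s)
    rw [Real.tan_arctan] at h2
    exact h2.le
  rcases lt_trichotomy t 0 with ht | rfl | ht
  · have h1 : 0 < Real.arctan (-t) := by
      simpa using Real.arctan_strictMono (by linarith : (0:ℝ) < -t)
    rw [abs_of_neg ht, abs_of_neg (by rw [show t = -(-t) by ring, Real.arctan_neg]; linarith)]
    have := key (-t) (by linarith)
    rw [Real.arctan_neg] at this; linarith
  · simp
  · have h1 : 0 < Real.arctan t := by simpa using Real.arctan_strictMono ht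
    rw [abs_of_pos ht, abs_of_pos h1]; exact key t ht

private lemma my_poly (t : ℝ) : |t| ≤ 3 * (1 + (t ^ 2 - 4) ^ 2) := by
  rcases abs_cases t with ⟨h, _⟩ | ⟨h, _⟩ <;> rw [h] <;>
    nlinarith [sq_nonneg (t^2-4), sq_nonneg t, sq_nonneg (t-2), sq_nonneg (t+2),
      sq_nonneg (t^2-4-1), sq_nonneg (3*(t^2-4) - 1)]

private lemma my_sign {g : ℝ → ℝ} (hc : Continuous g) {l : Filter ℝ} {s : Set ℝ}
    (hs : s ∈ l) (hconn : IsPreconnected s) (hne : ∀ x ∈ s, g x ≠ 0)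
    (hsq : Tendsto (fun x => g x ^ 2) l (nhds 4)) :
    Tendsto g l (nhds 2) ∨ Tendsto g l (nhds (-2)) := by
  rcases s.eq_empty_or_nonempty with rfl | ⟨x₀, hx₀⟩
  · left
    have : l = ⊥ := Filter.empty_mem_iff_bot.1 hs
    simp [this]
  have himg : IsPreconnected (g '' s) := hconn.image g hc.continuousOn
  have hsqrt4 : Real.sqrt 4 = 2 := by
    rw [show (4:ℝ) = 2^2 by norm_num, Real.sqrt_sq (by norm_num : (0:ℝ) ≤ 2)]
  have hsqrt : Tendsto (fun x => Real.sqrt (g x ^ 2)) l (nhds 2) := by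
    have := (Real.continuous_sqrt.tendsto 4).comp hsq
    simpa [Function.comp_def, hsqrt4] using this
  rcases lt_or_gt_of_ne (hne x₀ hx₀) with hneg | hpos
  · right
    have hsgn : ∀ x ∈ s, g x < 0 := by
      intro x hx
      rcases lt_or_gt_of_ne (hne x hx) with h' | h'
      · exact h'
      · exfalso
        have h0 : (0:ℝ) ∈ Set.Icc (g x₀) (g x) := ⟨hneg.le, h'.le⟩
        obtain ⟨y, hy, hy0⟩ := himg.Icc_subset ⟨x₀, hx₀, rfl⟩ ⟨x, hx, rfl⟩ h0
        exact hne y hy hy0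
    apply hsqrt.neg.congr'
    filter_upwards [hs] with x hx
    rw [Real.sqrt_sq_eq_abs, abs_of_neg (hsgn x hx), neg_neg]
  · left
    have hsgn : ∀ x ∈ s, 0 < g x := by
      intro x hx
      rcases lt_or_gt_of_ne (hne x hx) with h' | h'
      · exfalso
        have h0 : (0:ℝ) ∈ Set.Icc (g x) (g x₀) := ⟨h'.le, hpos.le⟩
        obtain ⟨y, hy, hy0⟩ := himg.Icc_subset ⟨x, hx, rfl⟩ ⟨x₀, hx₀, rfl⟩ h0
        exact hne y hy hy0
      · exact h'
    apply hsqrt.congr'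
    filter_upwards [hs] with x hx
    rw [Real.sqrt_sq_eq_abs, abs_of_pos (hsgn x hx)]

/-- If `g : ℝ → ℝ` is `C¹` with `∫ (g')² < ∞` and `∫ (g² − 4)² < ∞`, then
`g(x)² → 4` as `|x| → ∞`: `g` tends to `2` or to `−2` at `+∞`, and likewise at `−∞`. -/
theorem finite_energy_limits (g : ℝ → ℝ) (hg : ContDiff ℝ 1 g)
    (h1 : Integrable (fun x => (deriv g x) ^ 2))
    (h2 : Integrable (fun x => ((g x) ^ 2 - 4) ^ 2)) :
    (Tendsto g atTop (nhds 2) ∨ Tendsto g atTop (nhds (-2))) ∧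
    (Tendsto g atBot (nhds 2) ∨ Tendsto g atBot (nhds (-2))) := by
  have hgc : Continuous g := hg.continuous
  have hdc : Continuous (deriv g) := hg.continuous_deriv le_rfl
  set F : ℝ → ℝ := fun x => (Real.arctan (g x ^ 2 - 4)) ^ 2 with hF_def
  set F' : ℝ → ℝ := fun x => 2 * Real.arctan (g x ^ 2 - 4) *
      (1 / (1 + (g x ^ 2 - 4) ^ 2) * (2 * g x * deriv g x)) with hF'_def
  have hderiv : ∀ x : ℝ, HasDerivAt F (F' x) x := by
    intro x
    have hd : HasDerivAt g (deriv g x) x := (hg.differentiable one_ne_zero x).hasDerivAt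
    have hh : HasDerivAt (fun x => g x ^ 2 - 4) (2 * g x * deriv g x) x := by
      have := (hd.pow 2).sub_const 4
      simpa [pow_one] using this
    have ha := (Real.hasDerivAt_arctan (g x ^ 2 - 4)).comp x hh
    have h2d : HasDerivAt F (((2:ℕ):ℝ) * (Real.arctan ∘ fun x => g x ^ 2 - 4) x ^ (2 - 1) *
        (1 / (1 + (g x ^ 2 - 4) ^ 2) * (2 * g x * deriv g x))) x := ha.fun_pow 2
    convert h2d using 1
    simp only [Function.comp_apply]
    push_cast
    ring
  -- integrability of F
  have hFc : Continuous F := by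
    apply Continuous.pow
    exact Real.continuous_arctan.comp (by continuity)
  have hFint : Integrable F := by
    apply h2.mono' hFc.aestronglyMeasurable
    filter_upwards with x
    rw [Real.norm_eq_abs, abs_of_nonneg (by positivity)]
    have := my_abs_arctan_le (g x ^ 2 - 4)
    calc (Real.arctan (g x ^ 2 - 4)) ^ 2 ≤ (g x ^ 2 - 4) ^ 2 := by
          rw [← sq_abs (Real.arctan _), ← sq_abs (g x ^ 2 - 4)]
          exact pow_le_pow_left₀ (abs_nonneg _) this 2
      _ = _ := rfl
  -- integrability of F'
  have hF'c : Continuous F' := by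
    have hc1 : Continuous fun x => 1 / (1 + (g x ^ 2 - 4) ^ 2) :=
      continuous_const.div (by continuity) (fun x => by positivity)
    exact ((continuous_const.mul (Real.continuous_arctan.comp (by continuity))).mul
      (hc1.mul ((continuous_const.mul hgc).mul hdc)))
  have hF'int : Integrable F' := by
    apply Integrable.mono' ((h2.const_mul 6).add (h1.const_mul 6)) hF'c.aestronglyMeasurable
    filter_upwards with x
    simp only [Pi.add_apply]
    set h := g x ^ 2 - 4 with hh_def
    set d := deriv g x with hd_def
    have hp : (0:ℝ) < 1 + h ^ 2 := by positivity
    have e1 := my_abs_arctan_le h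
    have e2 : |g x| ≤ 3 * (1 + h ^ 2) := my_poly (g x)
    have habs : ‖F' x‖ = 2 * |Real.arctan h| * (1 / (1 + h ^ 2) * (2 * |g x| * |d|)) := by
      rw [Real.norm_eq_abs, hF'_def]
      simp only [← hh_def, ← hd_def]
      rw [abs_mul, abs_mul, abs_mul, abs_mul, abs_div, abs_two, abs_one, abs_of_pos hp, abs_mul, abs_two]
    rw [habs]
    have step : 2 * |Real.arctan h| * (1 / (1 + h ^ 2) * (2 * |g x| * |d|)) ≤
        2 * |h| * (1 / (1 + h ^ 2) * (2 * (3 * (1 + h ^ 2)) * |d|)) := by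
      gcongr
    have eq1 : 2 * |h| * (1 / (1 + h ^ 2) * (2 * (3 * (1 + h ^ 2)) * |d|)) =
        12 * (|h| * |d|) := by
      field_simp; ring
    rw [eq1] at step
    refine step.trans ?_
    nlinarith [sq_nonneg (|h| - |d|), sq_abs h, sq_abs d, abs_nonneg h, abs_nonneg d]
  -- limits of F at ±∞
  have hF0top : Tendsto F atTop (nhds 0) :=
    tendsto_zero_of_hasDerivAt_of_integrableOn_Ioi (a := 0)
      (fun x _ => hderiv x) hF'int.integrableOn hFint.integrableOn
  have hF0bot : Tendsto F atBot (nhds 0) :=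
    tendsto_zero_of_hasDerivAt_of_integrableOn_Iic (a := 0)
      (fun x _ => hderiv x) hF'int.integrableOn hFint.integrableOn
  -- g² → 4 along each filter
  have hsq : ∀ l : Filter ℝ, Tendsto F l (nhds 0) →
      Tendsto (fun x => g x ^ 2) l (nhds 4) := by
    intro l hF0
    have hsqrtF : Tendsto (fun x => Real.sqrt (F x)) l (nhds 0) := by
      have := (Real.continuous_sqrt.tendsto 0).comp hF0
      simpa [Function.comp_def] using this
    have harc : Tendsto (fun x => Real.arctan (g x ^ 2 - 4)) l (nhds 0) := by
      apply squeeze_zero_norm _ hsqrtF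
      intro x
      rw [Real.norm_eq_abs, hF_def, Real.sqrt_sq_eq_abs]
    have hc : ContinuousAt Real.tan 0 := Real.continuousAt_tan.2 (by simp)
    have htan := hc.tendsto.comp harc
    rw [Real.tan_zero] at htan
    have hh0 : Tendsto (fun x => g x ^ 2 - 4) l (nhds 0) := by
      apply htan.congr
      intro x
      simp [Function.comp, Real.tan_arctan]
    simpa using hh0.add_const 4
  have hsqTop := hsq atTop hF0top
  have hsqBot := hsq atBot hF0bot
  -- eventually g ≠ 0
  have hev : ∀ᶠ x in atTop, 1 < g x ^ 2 :=
    hsqTop.eventually (eventually_gt_nhds (by norm_num))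
  have hev' : ∀ᶠ x in atBot, 1 < g x ^ 2 :=
    hsqBot.eventually (eventually_gt_nhds (by norm_num))
  obtain ⟨A, hA⟩ := eventually_atTop.1 hev
  obtain ⟨B, hB⟩ := eventually_atBot.1 hev'
  constructor
  · refine my_sign hgc (Ici_mem_atTop A) isPreconnected_Ici ?_ hsqTop
    intro x hx hx0
    have := hA x hx
    rw [hx0] at this; norm_num at this
  · refine my_sign hgc (Iic_mem_atBot B) isPreconnected_Iic ?_ hsqBot
    intro x hx hx0
    have := hB x hx
    rw [hx0] at this; norm_num at this
end

section
/- Let Q : [−1,1] → Sym₀(3) (traceless symmetric 3×3 real matrices) be a C² solution of (1/λ²) Q'' = (θ/3) Q − 2(Q² − (|Q|²/3) I) + (1/2)|Q|² Q, where λ > 0, θ < 1, and |Q|² = tr(Q²). Then |Q(x)| ≤ max(|Q(−1)|, |Q(1)|, 2√6 q₊) for all x ∈ [−1,1], where 6 q₊ = 1 + √(1 − θ). In particular, if the boundary data satisfy |Q(±1)| ≤ 2√6 q₊, then |Q| ≤ 2√6 q₊ everywhere. -/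
/-- The squared Frobenius norm `|A|² = ∑ᵢⱼ Aᵢⱼ² = tr(A²)` (for symmetric `A`). -/
noncomputable def mnorm2 (A : Matrix (Fin 3) (Fin 3) ℝ) : ℝ :=
  ∑ i : Fin 3, ∑ j : Fin 3, (A i j) ^ 2

lemma cubic_ineq (a b c : ℝ) (h : a + b + c = 0) :
    (a^3+b^3+c^3)^2 ≤ (a^2+b^2+c^2)^3 / 6 := by
  have hc : c = -a - b := by linarith
  subst hc
  nlinarith [sq_nonneg (a-b), sq_nonneg (a+b), sq_nonneg (a*b), sq_nonneg (a*b*(a+b)),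
    sq_nonneg ((a-b)*(2*a+b)), sq_nonneg ((a+2*b)*(2*a+b))]

open Matrix in
lemma trace_cube_ineq (A : Matrix (Fin 3) (Fin 3) ℝ) (hs : A.IsSymm) (ht : A.trace = 0) :
    (trace (A*A*A))^2 ≤ (trace (A*A))^3 / 6 := by
  have hA : A.IsHermitian := hs
  set U : Matrix (Fin 3) (Fin 3) ℝ := (hA.eigenvectorUnitary : Matrix (Fin 3) (Fin 3) ℝ) with hUdef
  set D : Matrix (Fin 3) (Fin 3) ℝ := diagonal (RCLike.ofReal ∘ hA.eigenvalues) with hDdef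
  have hspec : A = U * D * star U := hA.spectral_theorem
  have hsU : star U * U = 1 := Unitary.coe_star_mul_self hA.eigenvectorUnitary
  have h2 : A * A = U * (D * D) * star U := by
    conv_lhs => rw [hspec]
    calc (U*D*star U)*(U*D*star U) = U*D*((star U*U)*(D*star U)) := by simp only [mul_assoc]
    _ = U * (D*D) * star U := by rw [hsU, one_mul]; simp only [mul_assoc]
  have h3 : A * A * A = U * (D * D * D) * star U := by
    rw [h2]; conv_lhs => rw [hspec]
    calc (U*(D*D)*star U)*(U*D*star U) = U*(D*D)*((star U*U)*(D*star U)) := by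
          simp only [mul_assoc]
    _ = U * (D*D*D) * star U := by rw [hsU, one_mul]; simp only [mul_assoc]
  have key : ∀ M : Matrix (Fin 3) (Fin 3) ℝ, trace (U * M * star U) = trace M := by
    intro M
    rw [trace_mul_cycle, hsU, one_mul]
  have e1 : trace A = ∑ i, hA.eigenvalues i := by
    conv_lhs => rw [hspec]
    rw [key, hDdef, trace_diagonal]; simp
  have e2 : trace (A*A) = ∑ i, (hA.eigenvalues i)^2 := by
    rw [h2, key, hDdef, diagonal_mul_diagonal, trace_diagonal]
    refine Finset.sum_congr rfl fun i _ => ?_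
    simp [sq]
  have e3 : trace (A*A*A) = ∑ i, (hA.eigenvalues i)^3 := by
    rw [h3, key, hDdef, diagonal_mul_diagonal, diagonal_mul_diagonal, trace_diagonal]
    refine Finset.sum_congr rfl fun i _ => ?_
    simp; ring
  rw [e2, e3, Fin.sum_univ_three, Fin.sum_univ_three]
  apply cubic_ineq
  have := e1 ▸ ht
  rw [Fin.sum_univ_three] at this
  linarith

open Matrix in
/-- trace identities in terms of `mnorm2`. -/
lemma mnorm2_eq_trace (A : Matrix (Fin 3) (Fin 3) ℝ) (hs : A.IsSymm) :
    mnorm2 A = trace (A*A) := by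
  unfold mnorm2
  rw [Matrix.trace]
  simp only [Matrix.diag, Matrix.mul_apply]
  rw [Finset.sum_comm]
  refine Finset.sum_congr rfl fun i _ => Finset.sum_congr rfl fun j _ => ?_
  rw [hs.apply i j]  -- check direction
  ring

/-- Second derivative test: at an interior maximum of a C² function on `[-1,1]`,
the second derivative is nonpositive. -/
lemma second_deriv_nonpos_of_max (f : ℝ → ℝ) (hf : ContDiff ℝ 2 f) {x₀ : ℝ}
    (hx : x₀ ∈ Set.Ioo (-1 : ℝ) 1) (hmax : ∀ y ∈ Set.Icc (-1 : ℝ) 1, f y ≤ f x₀) :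
    deriv (deriv f) x₀ ≤ 0 := by
  by_contra hpos
  push_neg at hpos
  have hf' : ContDiff ℝ 1 (deriv f) := by
    have h := (contDiff_succ_iff_deriv (n := 1)).mp (by exact_mod_cast hf)
    exact h.2.2
  have hdf : Differentiable ℝ f := hf.differentiable two_ne_zero
  have hddf : Differentiable ℝ (deriv f) := hf'.differentiable one_ne_zero
  have hcont : Continuous (deriv (deriv f)) := by
    have h := (contDiff_succ_iff_deriv (n := 0)).mp (by exact_mod_cast hf')
    exact h.2.2.continuous
  -- local max gives deriv f x₀ = 0
  have hloc : IsLocalMax f x₀ := by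
    have hIcc : Set.Icc (-1 : ℝ) 1 ∈ nhds x₀ := Icc_mem_nhds hx.1 hx.2
    exact Filter.eventually_iff_exists_mem.2 ⟨_, hIcc, hmax⟩
  have hd0 : deriv f x₀ = 0 := hloc.deriv_eq_zero
  -- find a small interval right of x₀ where deriv deriv f > 0
  have hopen : IsOpen {y | 0 < deriv (deriv f) y} := isOpen_lt continuous_const hcont
  obtain ⟨ε, hε, hball⟩ := Metric.isOpen_iff.mp hopen x₀ hpos
  set δ := min (ε/2) ((1 - x₀)/2) with hδdef
  have hδ : 0 < δ := lt_min (by linarith) (by linarith [hx.2])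
  have hsub : Set.Icc x₀ (x₀ + δ) ⊆ Metric.ball x₀ ε := by
    intro y hy
    rw [Metric.mem_ball, Real.dist_eq, abs_lt]
    have h1 : y ≤ x₀ + δ := hy.2
    have h2 : δ ≤ ε/2 := min_le_left _ _
    have h3 : x₀ ≤ y := hy.1
    constructor <;> linarith
  have hmono' : StrictMonoOn (deriv f) (Set.Icc x₀ (x₀ + δ)) := by
    apply strictMonoOn_of_deriv_pos (convex_Icc _ _) (hddf.continuous.continuousOn)
    intro y hy
    rw [interior_Icc] at hy
    exact hball (hsub ⟨hy.1.le, hy.2.le⟩)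
  have hderiv_pos : ∀ y ∈ Set.Ioo x₀ (x₀ + δ), 0 < deriv f y := by
    intro y hy
    have := hmono' (Set.left_mem_Icc.2 (by linarith)) ⟨hy.1.le, hy.2.le⟩ hy.1
    rwa [hd0] at this
  have hmono : StrictMonoOn f (Set.Icc x₀ (x₀ + δ)) := by
    apply strictMonoOn_of_deriv_pos (convex_Icc _ _) (hdf.continuous.continuousOn)
    intro y hy
    rw [interior_Icc] at hy
    exact hderiv_pos y hy
  have hlt : f x₀ < f (x₀ + δ) :=
    hmono (Set.left_mem_Icc.2 (by linarith)) (Set.right_mem_Icc.2 (by linarith)) (by linarith)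
  have hin : x₀ + δ ∈ Set.Icc (-1 : ℝ) 1 := by
    constructor
    · linarith [hx.1]
    · have : δ ≤ (1 - x₀)/2 := min_le_right _ _
      linarith
  exact absurd (hmax _ hin) (not_le.2 hlt)

open Matrix in
lemma inner_mul_eq_trace (A : Matrix (Fin 3) (Fin 3) ℝ) (hs : A.IsSymm) :
    ∑ i : Fin 3, ∑ j : Fin 3, A i j * (A*A) i j = trace (A*A*A) := by
  have h : ∀ i, (A*A*A) i i = ∑ j, (A*A) i j * A j i := fun i => Matrix.mul_apply
  rw [Matrix.trace]
  simp only [Matrix.diag, h]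
  refine Finset.sum_congr rfl fun i _ => Finset.sum_congr rfl fun j _ => ?_
  rw [hs.apply i j, mul_comm]

set_option maxHeartbeats 1000000 in
/-- **Maximum principle for the Q-tensor equation.** Let `Q : [−1,1] → Sym₀(3)` be a
`C²` (entrywise) solution of `(1/λ²) Q'' = (θ/3) Q − 2(Q² − (|Q|²/3) I) + (1/2)|Q|² Q`
with `λ > 0`, `θ < 1`. Then `|Q(x)| ≤ max(|Q(−1)|, |Q(1)|, 2√6 q₊)` on `[−1,1]`,
where `6 q₊ = 1 + √(1 − θ)`. -/
theorem qtensor_maximum_principle (lam θ : ℝ) (hlam : 0 < lam) (hθ : θ < 1)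
    (Q : ℝ → Matrix (Fin 3) (Fin 3) ℝ)
    (hsymm : ∀ x : ℝ, (Q x).IsSymm)
    (htrace : ∀ x : ℝ, Matrix.trace (Q x) = 0)
    (hC2 : ∀ i j : Fin 3, ContDiff ℝ 2 (fun t : ℝ => Q t i j))
    (hode : ∀ x ∈ Set.Icc (-1 : ℝ) 1, ∀ i j : Fin 3,
      (1 / lam ^ 2) * deriv (deriv (fun t : ℝ => Q t i j)) x =
        (θ / 3) * Q x i j
          - 2 * ((Q x * Q x) i j - (mnorm2 (Q x) / 3) * (1 : Matrix (Fin 3) (Fin 3) ℝ) i j)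
          + (1 / 2) * mnorm2 (Q x) * Q x i j) :
    ∀ x ∈ Set.Icc (-1 : ℝ) 1,
      Real.sqrt (mnorm2 (Q x)) ≤
        max (max (Real.sqrt (mnorm2 (Q (-1)))) (Real.sqrt (mnorm2 (Q 1))))
          (2 * Real.sqrt 6 * ((1 + Real.sqrt (1 - θ)) / 6)) := by
  intro x hx
  classical
  have hfC2 : ContDiff ℝ 2 (fun t => mnorm2 (Q t)) := by
    show ContDiff ℝ 2 fun t => ∑ i : Fin 3, ∑ j : Fin 3, (Q t i j)^2
    apply ContDiff.sum; intro i _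
    apply ContDiff.sum; intro j _
    exact (hC2 i j).pow 2
  obtain ⟨x₀, hx₀, hmax0⟩ := isCompact_Icc.exists_isMaxOn (Set.nonempty_Icc.mpr (by norm_num : (-1:ℝ) ≤ 1))
    hfC2.continuous.continuousOn
  have hmax : ∀ y ∈ Set.Icc (-1:ℝ) 1, mnorm2 (Q y) ≤ mnorm2 (Q x₀) := fun y hy => hmax0 hy
  have hsq : Real.sqrt (mnorm2 (Q x)) ≤ Real.sqrt (mnorm2 (Q x₀)) :=
    Real.sqrt_le_sqrt (hmax x hx)
  refine le_trans hsq ?_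
  rcases eq_or_lt_of_le hx₀.1 with h1 | h1
  · rw [← h1]; exact le_max_of_le_left (le_max_left _ _)
  rcases eq_or_lt_of_le hx₀.2 with h2 | h2
  · rw [h2]; exact le_max_of_le_left (le_max_right _ _)
  refine le_max_of_le_right ?_
  have hIoo : x₀ ∈ Set.Ioo (-1:ℝ) 1 := ⟨h1, h2⟩
  set s : ℝ := mnorm2 (Q x₀) with hsdef
  have hs0 : 0 ≤ s := by
    rw [hsdef]; unfold mnorm2
    exact Finset.sum_nonneg fun i _ => Finset.sum_nonneg fun j _ => sq_nonneg _
  -- differentiability facts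
  have hdiff : ∀ i j : Fin 3, Differentiable ℝ (fun t => Q t i j) :=
    fun i j => (hC2 i j).differentiable two_ne_zero
  have hddiff : ∀ i j : Fin 3, Differentiable ℝ (deriv (fun t => Q t i j)) := by
    intro i j
    have h := (contDiff_succ_iff_deriv (n := 1)).mp (by exact_mod_cast hC2 i j)
    exact h.2.2.differentiable one_ne_zero
  -- first derivative
  have hD1 : ∀ t : ℝ, HasDerivAt (fun u => mnorm2 (Q u))
      (∑ i : Fin 3, ∑ j : Fin 3, 2 * Q t i j * deriv (fun u => Q u i j) t) t := by
    intro t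
    have : ∀ i ∈ (Finset.univ : Finset (Fin 3)), HasDerivAt (fun u => ∑ j : Fin 3, (Q u i j)^2)
        (∑ j : Fin 3, 2 * Q t i j * deriv (fun u => Q u i j) t) t := by
      intro i _
      apply HasDerivAt.fun_sum
      intro j _
      have h := ((hdiff i j) t).hasDerivAt
      have := h.fun_pow 2
      exact this.congr_deriv (by ring)
    have h2 := HasDerivAt.fun_sum this
    exact h2
  have hderivf : deriv (fun u => mnorm2 (Q u)) =
      fun t => ∑ i : Fin 3, ∑ j : Fin 3, 2 * Q t i j * deriv (fun u => Q u i j) t :=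
    funext fun t => (hD1 t).deriv
  -- second derivative at x₀
  have hD2 : HasDerivAt (deriv (fun u => mnorm2 (Q u)))
      (∑ i : Fin 3, ∑ j : Fin 3,
        (2 * (deriv (fun u => Q u i j) x₀)^2
          + 2 * Q x₀ i j * deriv (deriv (fun u => Q u i j)) x₀)) x₀ := by
    rw [hderivf]
    apply HasDerivAt.fun_sum
    intro i _
    apply HasDerivAt.fun_sum
    intro j _
    have hg : HasDerivAt (fun u => Q u i j) (deriv (fun u => Q u i j) x₀) x₀ :=
      ((hdiff i j) x₀).hasDerivAt
    have hg' : HasDerivAt (deriv (fun u => Q u i j)) (deriv (deriv (fun u => Q u i j)) x₀) x₀ :=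
      ((hddiff i j) x₀).hasDerivAt
    have h := (hg.fun_mul hg').const_mul (2:ℝ)
    have heq : (fun t => (2:ℝ) * (Q t i j * deriv (fun u => Q u i j) t))
        = (fun t => 2 * Q t i j * deriv (fun u => Q u i j) t) := by funext t; ring
    rw [heq] at h
    exact h.congr_deriv (by ring)
  have hsec : deriv (deriv (fun u => mnorm2 (Q u))) x₀ =
      ∑ i : Fin 3, ∑ j : Fin 3,
        (2 * (deriv (fun u => Q u i j) x₀)^2
          + 2 * Q x₀ i j * deriv (deriv (fun u => Q u i j)) x₀) := hD2.deriv
  have hle := second_deriv_nonpos_of_max _ hfC2 hIoo hmax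
  rw [hsec] at hle
  -- drop the square terms
  have hsplit : ∑ i : Fin 3, ∑ j : Fin 3,
      Q x₀ i j * deriv (deriv (fun u => Q u i j)) x₀ ≤ 0 := by
    have hpos : 0 ≤ ∑ i : Fin 3, ∑ j : Fin 3, 2 * (deriv (fun u => Q u i j) x₀)^2 :=
      Finset.sum_nonneg fun i _ => Finset.sum_nonneg fun j _ => by positivity
    have hsplit' : ∑ i : Fin 3, ∑ j : Fin 3,
        (2 * (deriv (fun u => Q u i j) x₀)^2
          + 2 * Q x₀ i j * deriv (deriv (fun u => Q u i j)) x₀)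
        = (∑ i : Fin 3, ∑ j : Fin 3, 2 * (deriv (fun u => Q u i j) x₀)^2)
          + 2 * ∑ i : Fin 3, ∑ j : Fin 3, Q x₀ i j * deriv (deriv (fun u => Q u i j)) x₀ := by
      rw [Finset.mul_sum]
      rw [← Finset.sum_add_distrib]
      refine Finset.sum_congr rfl fun i _ => ?_
      rw [Finset.mul_sum, ← Finset.sum_add_distrib]
      refine Finset.sum_congr rfl fun j _ => by ring
    rw [hsplit'] at hle
    linarith
  -- substitute the ODE
  set T : ℝ := Matrix.trace (Q x₀ * Q x₀ * Q x₀) with hTdef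
  have hlam2 : (lam:ℝ)^2 ≠ 0 := by positivity
  have key : ∀ i j : Fin 3, Q x₀ i j * deriv (deriv (fun u => Q u i j)) x₀ =
      lam^2 * ((θ/3)*(Q x₀ i j)^2
        - 2*(Q x₀ i j * (Q x₀ * Q x₀) i j - (s/3)*(Q x₀ i j * (1 : Matrix (Fin 3) (Fin 3) ℝ) i j))
        + (1/2)*s*(Q x₀ i j)^2) := by
    intro i j
    have h := hode x₀ ⟨hIoo.1.le, hIoo.2.le⟩ i j
    have h' : deriv (deriv (fun t : ℝ => Q t i j)) x₀ =
        lam^2 * ((θ / 3) * Q x₀ i j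
          - 2 * ((Q x₀ * Q x₀) i j - (s / 3) * (1 : Matrix (Fin 3) (Fin 3) ℝ) i j)
          + (1 / 2) * s * Q x₀ i j) := by
      rw [← hsdef] at h
      field_simp at h
      linarith
    rw [h']; ring
  have hI : ∑ i : Fin 3, ∑ j : Fin 3, Q x₀ i j * (1 : Matrix (Fin 3) (Fin 3) ℝ) i j = 0 := by
    have := htrace x₀
    rw [Matrix.trace_fin_three] at this
    simp [Fin.sum_univ_three, Matrix.one_apply]
    linarith
  have hTsum : ∑ i : Fin 3, ∑ j : Fin 3, Q x₀ i j * (Q x₀ * Q x₀) i j = T :=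
    inner_mul_eq_trace _ (hsymm x₀)
  have hssum : ∑ i : Fin 3, ∑ j : Fin 3, (Q x₀ i j)^2 = s := rfl
  have hsum : ∑ i : Fin 3, ∑ j : Fin 3, Q x₀ i j * deriv (deriv (fun u => Q u i j)) x₀
      = lam^2 * ((θ/3)*s - 2*T + (1/2)*s^2) := by
    calc ∑ i : Fin 3, ∑ j : Fin 3, Q x₀ i j * deriv (deriv (fun u => Q u i j)) x₀
        = ∑ i : Fin 3, ∑ j : Fin 3, lam^2 * ((θ/3)*(Q x₀ i j)^2
          - 2*(Q x₀ i j * (Q x₀ * Q x₀) i j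
              - (s/3)*(Q x₀ i j * (1 : Matrix (Fin 3) (Fin 3) ℝ) i j))
          + (1/2)*s*(Q x₀ i j)^2) :=
          Finset.sum_congr rfl fun i _ => Finset.sum_congr rfl fun j _ => key i j
      _ = lam^2 * ((θ/3)*(∑ i : Fin 3, ∑ j : Fin 3, (Q x₀ i j)^2)
          - 2*((∑ i : Fin 3, ∑ j : Fin 3, Q x₀ i j * (Q x₀ * Q x₀) i j)
              - (s/3)*(∑ i : Fin 3, ∑ j : Fin 3, Q x₀ i j * (1 : Matrix (Fin 3) (Fin 3) ℝ) i j))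
          + (1/2)*s*(∑ i : Fin 3, ∑ j : Fin 3, (Q x₀ i j)^2)) := by
          simp only [Fin.sum_univ_three]; ring
      _ = lam^2 * ((θ/3)*s - 2*T + (1/2)*s^2) := by
          rw [hI, hTsum, hssum]; ring
  rw [hsum] at hsplit
  have hkey : (θ/3)*s - 2*T + (1/2)*s^2 ≤ 0 := by
    by_contra hcon
    push_neg at hcon
    exact absurd hsplit (not_le.2 (mul_pos (pow_pos hlam 2) hcon))
  -- trace cube inequality
  have hstr : s = Matrix.trace (Q x₀ * Q x₀) := mnorm2_eq_trace _ (hsymm x₀)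
  have hTineq : T^2 ≤ s^3/6 := by
    rw [hTdef, hstr]
    exact trace_cube_ineq _ (hsymm x₀) (htrace x₀)
  -- final algebra
  set r : ℝ := Real.sqrt s with hrdef
  have hr0 : 0 ≤ r := Real.sqrt_nonneg _
  have hr2 : r^2 = s := Real.sq_sqrt hs0
  set c : ℝ := Real.sqrt 6 with hcdef
  have hc2 : c^2 = 6 := Real.sq_sqrt (by norm_num)
  have hcpos : 0 < c := Real.sqrt_pos.mpr (by norm_num)
  set w : ℝ := Real.sqrt (1-θ) with hwdef
  have hw2 : w^2 = 1-θ := Real.sq_sqrt (by linarith)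
  have hwpos : 0 < w := Real.sqrt_pos.mpr (by linarith)
  show r ≤ 2*c*((1+w)/6)
  rcases eq_or_lt_of_le hr0 with hr | hr
  · rw [← hr]; positivity
  have hTineq' : T^2 ≤ (r^2)^3/6 := by rw [hr2]; exact hTineq
  have h6 : (T*c)^2 ≤ (r^3)^2 := by nlinarith [hTineq', hc2]
  have hTc : T * c ≤ r^3 := by nlinarith [h6, pow_pos hr 3]
  have hq0 : (θ/3)*r^2 + (1/2)*r^4 ≤ 2*T := by nlinarith [hkey, hr2]
  have hq1 : c*θ*r^2/3 + c*r^4/2 ≤ 2*r^3 := by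
    nlinarith [mul_le_mul_of_nonneg_left hq0 hcpos.le, hTc]
  have hq2 : 2*θ*r^2 + 3*r^4 ≤ 2*c*r^3 := by
    have e : c*(c*θ*r^2/3 + c*r^4/2) = 2*θ*r^2 + 3*r^4 := by
      linear_combination (θ*r^2/3 + r^4/2)*hc2
    have h := mul_le_mul_of_nonneg_left hq1 hcpos.le
    rw [e] at h
    nlinarith [h]
  by_contra hcontra
  push_neg at hcontra
  have hB : c*(1+w)/3 < r := by nlinarith [hcontra]
  have hB' : c*(1-w)/3 < r := by nlinarith [hB, mul_pos hcpos hwpos]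
  have hexp2 : r^2*((r - c*(1+w)/3)*(r - c*(1-w)/3)) = r^4 - (2*c/3)*r^3 + (2/3)*θ*r^2 := by
    linear_combination ((1-w^2)*r^2/9)*hc2 - (2*r^2/3)*hw2
  have hpos' : 0 < r^2*((r - c*(1+w)/3)*(r - c*(1-w)/3)) :=
    mul_pos (pow_pos hr 2) (mul_pos (by linarith) (by linarith))
  rw [hexp2] at hpos'
  linarith
end

section
/- For any traceless symmetric 3×3 real matrix Q, one has |tr(Q³)| ≤ (1/√6) |Q|³, where |Q|² = tr(Q²), with equality if and only if Q is uniaxial, i.e., Q = s(n⊗n − I/3) for some s ∈ ℝ and unit vector n. -/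
open Matrix

private lemma conj_single' (V : Matrix (Fin 3) (Fin 3) ℝ) (k : Fin 3) :
    V * Matrix.single k k (1:ℝ) * star V
      = Matrix.vecMulVec (fun x => V x k) (fun x => V x k) := by
  ext x y
  simp [Matrix.mul_apply, Matrix.single, Matrix.vecMulVec_apply, Matrix.star_apply,
    ite_and, Finset.sum_mul, Finset.mul_sum]

private lemma trace_conj' (V W D : Matrix (Fin 3) (Fin 3) ℝ) (h : W * V = 1) :
    (V * D * W).trace = D.trace := by
  rw [Matrix.trace_mul_comm, ← Matrix.mul_assoc, h, Matrix.one_mul]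

private lemma key_identity (a b c : ℝ) (h : a + b + c = 0) :
    (a^2+b^2+c^2)^3 = 6*(a^3+b^3+c^3)^2 + 2*((a-b)*(b-c)*(c-a))^2 := by
  have hc : c = -a - b := by linarith
  subst hc; ring

private lemma sqrt_form (t : ℝ) (ht : 0 ≤ t) :
    (1 / Real.sqrt 6) * Real.sqrt t ^ 3 = Real.sqrt (t^3/6) := by
  rw [Real.sqrt_div (by positivity) 6]
  rw [show t^3 = t^2 * t by ring, Real.sqrt_mul (sq_nonneg t), Real.sqrt_sq ht]
  rw [pow_succ, sq, Real.mul_self_sqrt ht]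
  ring

private lemma uniaxial_case (V : Matrix (Fin 3) (Fin 3) ℝ) (μ : Fin 3 → ℝ)
    (hV1 : star V * V = 1) (hV2 : V * star V = 1)
    (hsum : μ 0 + μ 1 + μ 2 = 0)
    (k : Fin 3) (heq : ∀ x y : Fin 3, x ≠ k → y ≠ k → μ x = μ y) :
    ∃ (s : ℝ) (n : Fin 3 → ℝ), (∑ i : Fin 3, (n i) ^ 2 = 1) ∧
      V * Matrix.diagonal μ * star V
        = s • (Matrix.vecMulVec n n - (1/3:ℝ) • (1 : Matrix (Fin 3) (Fin 3) ℝ)) := by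
  obtain ⟨i, hik⟩ := exists_ne k
  have hx : ∀ x, x ≠ k → μ x = μ i := fun x hx => heq x i hx hik
  have hm : 2 * μ i + μ k = 0 := by
    have hk : k = 0 ∨ k = 1 ∨ k = 2 := by fin_cases k <;> simp
    rcases hk with rfl | rfl | rfl
    · linarith [hx 1 (by decide), hx 2 (by decide)]
    · linarith [hx 0 (by decide), hx 2 (by decide)]
    · linarith [hx 0 (by decide), hx 1 (by decide)]
  have hD : Matrix.diagonal μ = (μ i) • (1 : Matrix (Fin 3) (Fin 3) ℝ)
      + (μ k - μ i) • Matrix.single k k (1:ℝ) := by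
    ext x y
    by_cases hxy : x = y
    · subst hxy
      by_cases hxk : x = k
      · subst hxk
        simp [Matrix.single, Matrix.one_apply]
      · simp only [Matrix.diagonal_apply_eq, Matrix.add_apply, Matrix.smul_apply,
          Matrix.one_apply_eq, Matrix.single, of_apply, smul_eq_mul]
        rw [if_neg (fun h => hxk h.1.symm)]
        rw [hx x hxk]; ring
    · simp only [Matrix.diagonal_apply_ne _ hxy, Matrix.add_apply, Matrix.smul_apply,
        Matrix.one_apply_ne hxy, Matrix.single, of_apply, smul_eq_mul]
      rw [if_neg (fun h => hxy (h.1.symm.trans h.2))]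
      ring
  refine ⟨μ k - μ i, fun x => V x k, ?_, ?_⟩
  · have := congrFun (congrFun hV1 k) k
    simpa [Matrix.mul_apply, Matrix.star_apply, Matrix.one_apply, sq] using this
  · have e1 : V * Matrix.diagonal μ * star V
        = (μ i) • (1 : Matrix (Fin 3) (Fin 3) ℝ)
          + (μ k - μ i) • Matrix.vecMulVec (fun x => V x k) (fun x => V x k) := by
      rw [hD]
      simp only [Matrix.mul_add, Matrix.add_mul, Matrix.mul_smul, Matrix.smul_mul,
        Matrix.mul_one, hV2, conj_single']
    rw [e1, smul_sub, smul_smul]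
    have hc : (μ k - μ i) * (1/3) = -(μ i) := by linarith
    rw [hc, neg_smul, sub_neg_eq_add, add_comm]

private lemma spectral3 (Q : Matrix (Fin 3) (Fin 3) ℝ) (hsymm : Q.IsSymm) :
    ∃ (μ : Fin 3 → ℝ) (V : Matrix (Fin 3) (Fin 3) ℝ),
      star V * V = 1 ∧ V * star V = 1 ∧ Q = V * Matrix.diagonal μ * star V := by
  have hQ : Q.IsHermitian := by
    rwa [Matrix.IsHermitian, Matrix.conjTranspose_eq_transpose_of_trivial]
  refine ⟨hQ.eigenvalues, hQ.eigenvectorUnitary, ?_, ?_, ?_⟩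
  · exact (Matrix.mem_unitaryGroup_iff').mp (hQ.eigenvectorUnitary).2
  · exact (Matrix.mem_unitaryGroup_iff).mp (hQ.eigenvectorUnitary).2
  · simpa using hQ.spectral_theorem

/-- For any traceless symmetric `3×3` real matrix `Q`,
`|tr(Q³)| ≤ (1/√6) |Q|³` where `|Q| = √(tr(Q²))` is the Frobenius norm, with equality
if and only if `Q` is uniaxial, i.e. `Q = s (n ⊗ n − I/3)` for some `s ∈ ℝ` and unit
vector `n ∈ ℝ³`. -/
theorem trace_cube_bound (Q : Matrix (Fin 3) (Fin 3) ℝ)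
    (hsymm : Q.IsSymm) (htrace : Q.trace = 0) :
    |Matrix.trace (Q * Q * Q)| ≤ (1 / Real.sqrt 6) * Real.sqrt (Matrix.trace (Q * Q)) ^ 3 ∧
    (|Matrix.trace (Q * Q * Q)| = (1 / Real.sqrt 6) * Real.sqrt (Matrix.trace (Q * Q)) ^ 3 ↔
      ∃ (s : ℝ) (n : Fin 3 → ℝ), (∑ i : Fin 3, (n i) ^ 2 = 1) ∧
        Q = s • (Matrix.vecMulVec n n - (1 / 3 : ℝ) • (1 : Matrix (Fin 3) (Fin 3) ℝ))) := by
  obtain ⟨μ, V, hV1, hV2, hQ⟩ := spectral3 Q hsymm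
  set W := star V with hW
  -- traces via eigenvalues
  have e2 : Q * Q = V * (Matrix.diagonal μ * Matrix.diagonal μ) * W := by
    rw [hQ]
    calc (V * Matrix.diagonal μ * W) * (V * Matrix.diagonal μ * W)
        = V * (Matrix.diagonal μ * ((W * V) * (Matrix.diagonal μ * W))) := by
          simp only [Matrix.mul_assoc]
      _ = V * (Matrix.diagonal μ * Matrix.diagonal μ) * W := by
          rw [hV1]; simp only [Matrix.one_mul, Matrix.mul_assoc]
  have e3 : Q * Q * Q = V * (Matrix.diagonal μ * Matrix.diagonal μ * Matrix.diagonal μ) * W := by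
    rw [e2, hQ]
    calc (V * (Matrix.diagonal μ * Matrix.diagonal μ) * W) * (V * Matrix.diagonal μ * W)
        = V * ((Matrix.diagonal μ * Matrix.diagonal μ) * ((W * V) * (Matrix.diagonal μ * W))) := by
          simp only [Matrix.mul_assoc]
      _ = _ := by rw [hV1]; simp only [Matrix.one_mul, Matrix.mul_assoc]
  have hsum : μ 0 + μ 1 + μ 2 = 0 := by
    have := trace_conj' V W (Matrix.diagonal μ) hV1
    rw [← hQ] at this
    rw [htrace] at this
    simpa [Matrix.trace_diagonal, Fin.sum_univ_three] using this.symm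
  have ht2 : Matrix.trace (Q * Q) = μ 0 ^ 2 + μ 1 ^ 2 + μ 2 ^ 2 := by
    rw [e2, trace_conj' V W _ hV1, Matrix.diagonal_mul_diagonal, Matrix.trace_diagonal,
      Fin.sum_univ_three]
    ring
  have ht3 : Matrix.trace (Q * Q * Q) = μ 0 ^ 3 + μ 1 ^ 3 + μ 2 ^ 3 := by
    rw [e3, trace_conj' V W _ hV1, Matrix.diagonal_mul_diagonal, Matrix.diagonal_mul_diagonal,
      Matrix.trace_diagonal, Fin.sum_univ_three]
    ring
  set t : ℝ := μ 0 ^ 2 + μ 1 ^ 2 + μ 2 ^ 2 with hts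
  set X : ℝ := μ 0 ^ 3 + μ 1 ^ 3 + μ 2 ^ 3 with hXs
  set p : ℝ := (μ 0 - μ 1) * (μ 1 - μ 2) * (μ 2 - μ 0) with hps
  have hkey : t^3 = 6 * X^2 + 2 * p^2 := key_identity _ _ _ hsum
  have htpos : 0 ≤ t := by rw [hts]; positivity
  clear_value t X p
  have hR : (1 / Real.sqrt 6) * Real.sqrt t ^ 3 = Real.sqrt (t^3/6) := sqrt_form t htpos
  have habs : |X| = Real.sqrt (X^2) := (Real.sqrt_sq_eq_abs X).symm
  rw [ht2, ht3, hR, habs]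
  constructor
  · apply Real.sqrt_le_sqrt
    nlinarith [sq_nonneg p]
  · rw [Real.sqrt_inj (sq_nonneg X) (div_nonneg (pow_nonneg htpos 3) (by norm_num))]
    constructor
    · intro hXe
      have hp : (μ 0 - μ 1) * (μ 1 - μ 2) * (μ 2 - μ 0) = 0 := by
        rw [← hps]
        have : p^2 = 0 := by nlinarith
        exact pow_eq_zero_iff (by norm_num) |>.mp this
      have hcases : μ 0 = μ 1 ∨ μ 1 = μ 2 ∨ μ 2 = μ 0 := by
        rcases mul_eq_zero.mp hp with h | h
        · rcases mul_eq_zero.mp h with h | h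
          · exact Or.inl (sub_eq_zero.mp h)
          · exact Or.inr (Or.inl (sub_eq_zero.mp h))
        · exact Or.inr (Or.inr (sub_eq_zero.mp h))
      have key : ∃ (s : ℝ) (n : Fin 3 → ℝ), (∑ i : Fin 3, (n i) ^ 2 = 1) ∧
          Q = s • (Matrix.vecMulVec n n - (1/3:ℝ) • (1 : Matrix (Fin 3) (Fin 3) ℝ)) := by
        rw [hQ]
        rcases hcases with h | h | h
        · refine uniaxial_case V μ hV1 hV2 hsum 2 ?_
          intro x y hxk hyk
          have hx2 : x = 0 ∨ x = 1 := by omega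
          have hy2 : y = 0 ∨ y = 1 := by omega
          rcases hx2 with rfl | rfl <;> rcases hy2 with rfl | rfl <;> first | rfl | exact h | exact h.symm
        · refine uniaxial_case V μ hV1 hV2 hsum 0 ?_
          intro x y hxk hyk
          have hx2 : x = 1 ∨ x = 2 := by omega
          have hy2 : y = 1 ∨ y = 2 := by omega
          rcases hx2 with rfl | rfl <;> rcases hy2 with rfl | rfl <;> first | rfl | exact h | exact h.symm
        · refine uniaxial_case V μ hV1 hV2 hsum 1 ?_
          intro x y hxk hyk
          have hx2 : x = 0 ∨ x = 2 := by omega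
          have hy2 : y = 0 ∨ y = 2 := by omega
          rcases hx2 with rfl | rfl <;> rcases hy2 with rfl | rfl <;> first | rfl | exact h | exact h.symm
      exact key
    · rintro ⟨s, n, hn, hQu⟩
      have h0 := hn
      rw [Fin.sum_univ_three] at h0
      have htr2 : Matrix.trace (Q * Q) = 2/3 * s^2 := by
        rw [hQu]
        simp [Matrix.trace, Matrix.mul_apply, Matrix.vecMulVec_apply, Matrix.one_apply,
          Fin.sum_univ_three, Matrix.diag]
        linear_combination (s^2*(n 0 ^2 + n 1 ^2 + n 2 ^2 + 1/3)) * h0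
      have htr3 : Matrix.trace (Q * Q * Q) = 2/9 * s^3 := by
        rw [hQu]
        simp [Matrix.trace, Matrix.mul_apply, Matrix.vecMulVec_apply, Matrix.one_apply,
          Fin.sum_univ_three, Matrix.diag]
        linear_combination (s^3*((n 0 ^2 + n 1 ^2 + n 2 ^2)^2 + 1/3)) * h0
      have hts' : t = 2/3 * s^2 := by rw [← ht2, htr2]
      have hXs' : X = 2/9 * s^3 := by rw [← ht3, htr3]
      rw [hts', hXs']
      ring_nf
end
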